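/- arXiv:1706.00655 — 2 statements merged into one kernel-verified Lean document; each statement's English description precedes it below -/
import Mathlib

section
/- Assume that (H, G₁) satisfies Condition A with constant ζ and Condition B with constant ζ for some integer ζ ≥ 1. Then G₁P⁻¹G₁ ⊆ P⁻¹: for all α, γ ∈ G₁ and every (H, G₁)-negative β ∈ G, the element αβγ is (H, G₁)-negative. -/
namespace GarsideOrder

variable {G : Type*} [Group G]

/-- `a ≤_R b` iff `b * a⁻¹ ∈ M`. -/
def leR (M : Submonoid G) (a b : G) : Prop := b * a⁻¹ ∈ M

/-- `a ≤_L b` iff `a⁻¹ * b ∈ M`. -/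
def leL (M : Submonoid G) (a b : G) : Prop := a⁻¹ * b ∈ M

/-- Right divisors (in `M`) of `a`. -/
def DivR (M : Submonoid G) (a : G) : Set G := {b : G | b ∈ M ∧ leR M b a}

/-- Left divisors (in `M`) of `a`. -/
def DivL (M : Submonoid G) (a : G) : Set G := {b : G | b ∈ M ∧ leL M b a}

/-- `a` is balanced if its sets of right and left divisors coincide. -/
def Balanced (M : Submonoid G) (a : G) : Prop := DivR M a = DivL M a

open Classical in
/-- The `N`-tail of `a`: the unique `b ∈ N` having the same right divisors lying in `N`
as `a` (w.r.t. the divisibility of the ambient monoid `M`). -/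
noncomputable def tail (M N : Submonoid G) (a : G) : G :=
  if h : ∃ b : G, b ∈ N ∧
      {c : G | c ∈ N ∧ leR M c a} = {c : G | c ∈ N ∧ leR M c b} then
    h.choose
  else 1

/-- Iterated stripping of alternating tails: first the `M₁`-tail, then the `N`-tail, etc. -/
noncomputable def strip (M M₁ N : Submonoid G) : ℕ → G → G
  | 0, a => a
  | i + 1, a =>
      strip M M₁ N i a *
        (tail M (if i % 2 = 0 then M₁ else N) (strip M M₁ N i a))⁻¹

/-- The breadth of `a`: the length of the alternating form of `a`, i.e. the least `p ≥ 1`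
such that stripping alternating tails `p` times reaches `1`. -/
noncomputable def bh (M M₁ N : Submonoid G) (a : G) : ℕ :=
  sInf {p : ℕ | 1 ≤ p ∧ strip M M₁ N p a = 1}

/-- The depth of `a`: `(bh a - 1)/2` if `bh a` is odd, `bh a / 2` if `bh a` is even;
in both cases this is `bh a / 2` with natural division. -/
noncomputable def dpt (M M₁ N : Submonoid G) (a : G) : ℕ := bh M M₁ N a / 2

/-- `a ∈ M` is unmovable if `Δ` does not right-divide it. -/
def Unmovable (M : Submonoid G) (Δ a : G) : Prop := a ∈ M ∧ ¬ leR M Δ a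

/-- `α` is `(H, G₁)`-negative: its `Δ`-form is `a Δ^{-k}` with `k ≥ 1` and
`dpt a < dpt (Δ^k)`. -/
def Negative (M M₁ N : Submonoid G) (Δ : G) (α : G) : Prop :=
  ∃ a : G, ∃ k : ℕ, Unmovable M Δ a ∧ 1 ≤ k ∧ α = a * (Δ ^ k)⁻¹ ∧
    dpt M M₁ N a < dpt M M₁ N (Δ ^ k)

/-- `α` is `(H, G₁)`-positive if `α⁻¹` is `(H, G₁)`-negative. -/
def Positive (M M₁ N : Submonoid G) (Δ : G) (α : G) : Prop :=
  Negative M M₁ N Δ α⁻¹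

/-- The set `Θ` of theta elements `θ^k a₀`, `k ≥ 1`, `a₀ ∈ M₁`. -/
def thetaSet (M₁ : Submonoid G) (θ : G) : Set G :=
  {x : G | ∃ k : ℕ, 1 ≤ k ∧ ∃ a₀ ∈ M₁, x = θ ^ k * a₀}

/-- `Θ̄ = Θ ∪ M₁`. -/
def thetaBar (M₁ : Submonoid G) (θ : G) : Set G := thetaSet M₁ θ ∪ (M₁ : Set G)

/-- Condition A with constant `ζ`: `dpt (Δ^k) = ζ k + 1` for all `k ≥ 1`. -/
def CondA (M M₁ N : Submonoid G) (Δ : G) (ζ : ℕ) : Prop :=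
  ∀ k : ℕ, 1 ≤ k → dpt M M₁ N (Δ ^ k) = ζ * k + 1

/-- Condition B with constant `ζ`. -/
def CondB (M M₁ N : Submonoid G) (Δ θ : G) (ζ : ℕ) : Prop :=
  ∀ a b c : G, ∀ t : ℤ,
    Unmovable M Δ a → Unmovable M Δ b →
    ¬(a ∈ thetaBar M₁ θ ∧ b ∈ thetaBar M₁ θ) →
    Unmovable M Δ c → a * b = c * Δ ^ t →
    ∃ ε : ℕ, ε ≤ 1 ∧
      (dpt M M₁ N c : ℤ) =
        (dpt M M₁ N a : ℤ) + (dpt M M₁ N b : ℤ) - (ζ : ℤ) * t - (ε : ℤ) ∧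
      ((a ∈ thetaSet M₁ θ ∨ b ∈ thetaSet M₁ θ ∨ c ∈ M₁) → ε = 1)

/-- A Garside structure with group of fractions the subgroup `car`. -/
structure IsGarsideOn (car : Subgroup G) (M : Submonoid G) (Δ : G) : Prop where
  M_sub : (M : Set G) ⊆ (car : Set G)
  delta_mem : Δ ∈ M
  units_trivial : ∀ x : G, x ∈ M → x⁻¹ ∈ M → x = 1
  noetherian : ∀ a ∈ M, ∃ n : ℕ, 1 ≤ n ∧ ∀ l : List G,
      (∀ x ∈ l, x ∈ M ∧ x ≠ 1) → l.prod = a → l.length ≤ n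
  balanced : Balanced M Δ
  div_finite : (DivR M Δ).Finite
  div_gen_monoid : Submonoid.closure (DivR M Δ) = M
  div_gen_group : Subgroup.closure (DivR M Δ) = car
  meet : ∀ a ∈ car, ∀ b ∈ car, ∃ c ∈ car, leR M c a ∧ leR M c b ∧
      ∀ d ∈ car, leR M d a → leR M d b → leR M d c
  join : ∀ a ∈ car, ∀ b ∈ car, ∃ c ∈ car, leR M a c ∧ leR M b c ∧
      ∀ d ∈ car, leR M a d → leR M b d → leR M c d

/-- The parabolic submonoid determined by `δ`: the submonoid generated by `Div(δ)`. -/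
def parM (M : Submonoid G) (δ : G) : Submonoid G := Submonoid.closure (DivR M δ)

/-- The parabolic subgroup determined by `δ`: the subgroup generated by `Div(δ)`. -/
def parG (M : Submonoid G) (δ : G) : Subgroup G := Subgroup.closure (DivR M δ)

/-- `δ` determines a parabolic substructure of `(G, M, Δ)`. -/
structure IsParabolic (M : Submonoid G) (Δ δ : G) : Prop where
  mem : δ ∈ M
  balanced : Balanced M δ
  div_eq : DivR M δ = DivR M Δ ∩ (parM M δ : Set G)

/-- The setting of Section 3: a Garside structure `(car, M, Δ)` together with two
parabolic substructures `(H, N, Λ)` (given by `lam`) and `(G₁, M₁, Δ₁)` (given by `δ1`),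
with `N ≠ M`, `M₁ ≠ M`, `N ∪ M₁` generating `M`, `Δ` central, `Δ₁` central in `G₁`. -/
structure Setting (G : Type*) [Group G] where
  car : Subgroup G
  M : Submonoid G
  Δ : G
  δ1 : G
  lam : G
  garside : IsGarsideOn car M Δ
  par1 : IsParabolic M Δ δ1
  parH : IsParabolic M Δ lam
  N_ne : parM M lam ≠ M
  M1_ne : parM M δ1 ≠ M
  unionGen : Submonoid.closure ((parM M lam : Set G) ∪ (parM M δ1 : Set G)) = M
  delta_central : ∀ g ∈ car, Δ * g = g * Δ
  delta1_central : ∀ g ∈ parG M δ1, δ1 * g = g * δ1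

namespace Setting

variable (S : Setting G)

/-- The parabolic submonoid `M₁`. -/
def M₁ : Submonoid G := parM S.M S.δ1

/-- The parabolic submonoid `N`. -/
def Nsub : Submonoid G := parM S.M S.lam

/-- The parabolic subgroup `G₁`. -/
def G₁ : Subgroup G := parG S.M S.δ1

/-- `θ = Δ Δ₁⁻¹`. -/
def theta : G := S.Δ * S.δ1⁻¹

/-- The set of `(H, G₁)`-negative elements. -/
def Neg : Set G := {α : G | Negative S.M S.M₁ S.Nsub S.Δ α}

/-- The set of `(H, G₁)`-positive elements. -/
def Pos : Set G := {α : G | α⁻¹ ∈ S.Neg}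

/-- Condition A. -/
def condA (ζ : ℕ) : Prop := CondA S.M S.M₁ S.Nsub S.Δ ζ

/-- Condition B. -/
def condB (ζ : ℕ) : Prop := CondB S.M S.M₁ S.Nsub S.Δ S.theta ζ

/-- `(H, G₁)` is a Dehornoy structure: `PP ⊆ P`, `G₁ P G₁ ⊆ P`, and the group is the
disjoint union of `P`, `P⁻¹` and `G₁`. -/
def IsDehornoy : Prop :=
  (∀ α ∈ S.Pos, ∀ β ∈ S.Pos, α * β ∈ S.Pos) ∧
  (∀ g₁ ∈ S.G₁, ∀ α ∈ S.Pos, ∀ g₂ ∈ S.G₁, g₁ * α * g₂ ∈ S.Pos) ∧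
  (∀ α ∈ S.car, α ∈ S.Pos ∨ α ∈ S.Neg ∨ α ∈ S.G₁) ∧
  (∀ α : G, ¬(α ∈ S.Pos ∧ α ∈ S.Neg)) ∧
  (∀ α : G, ¬(α ∈ S.Pos ∧ α ∈ S.G₁)) ∧
  (∀ α : G, ¬(α ∈ S.Neg ∧ α ∈ S.G₁))

end Setting

end GarsideOrder


namespace GarsideOrder

variable {G : Type*} [Group G]

section Basic

variable {car : Subgroup G} {M : Submonoid G} {Δ : G} (g : IsGarsideOn car M Δ)
  (hcar : car = ⊤)

theorem leR_refl (a : G) : leR M a a := by simp [leR, Submonoid.one_mem]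

theorem leR_trans {a b c : G} (h1 : leR M a b) (h2 : leR M b c) : leR M a c := by
  have : (c * b⁻¹) * (b * a⁻¹) ∈ M := M.mul_mem h2 h1
  show c * a⁻¹ ∈ M; simpa [mul_assoc] using this

include g in
theorem leR_antisymm {a b : G} (h1 : leR M a b) (h2 : leR M b a) : a = b := by
  have h3 : (a * b⁻¹)⁻¹ ∈ M := by have h1' : b * a⁻¹ ∈ M := h1; simpa [mul_inv_rev] using h1'
  have := g.units_trivial (a * b⁻¹) h2 h3
  exact mul_inv_eq_one.mp this

theorem leR_mul_right {a b : G} (g' : G) (h : leR M a b) : leR M (a * g') (b * g') := by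
  simpa [leR, mul_assoc] using h

theorem leR_mul_right_iff {a b : G} (g' : G) : leR M (a * g') (b * g') ↔ leR M a b := by
  constructor
  · intro h
    have := leR_mul_right (M := M) g'⁻¹ h
    simpa [mul_assoc] using this
  · exact leR_mul_right g'

theorem one_leR_iff {a : G} : leR M 1 a ↔ a ∈ M := by simp [leR]

theorem leR_mul_left {a : G} (h : a ∈ M) (b : G) : leR M b (a * b) := by
  simpa [leR, mul_assoc] using h

theorem mem_of_leR {a b : G} (ha : a ∈ M) (h : leR M a b) : b ∈ M := by
  have := M.mul_mem h ha
  simpa using this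

theorem leR_one_iff {a : G} : leR M a 1 ↔ a⁻¹ ∈ M := by simp [leR]

include g in
theorem eq_one_of_mem_of_inv_mem {a : G} (h1 : a ∈ M) (h2 : a⁻¹ ∈ M) : a = 1 :=
  g.units_trivial a h1 h2

include hcar in
theorem memCar (a : G) : a ∈ car := by simp [hcar]

/-- the meet (right-gcd) of two elements -/
noncomputable def meetR (g : IsGarsideOn car M Δ) (hcar : car = ⊤) (a b : G) : G :=
  (g.meet a (memCar hcar a) b (memCar hcar b)).choose

theorem meetR_le_left (a b : G) : leR M (meetR g hcar a b) a :=
  (g.meet a (memCar hcar a) b (memCar hcar b)).choose_spec.2.1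

theorem meetR_le_right (a b : G) : leR M (meetR g hcar a b) b :=
  (g.meet a (memCar hcar a) b (memCar hcar b)).choose_spec.2.2.1

theorem le_meetR {a b d : G} (h1 : leR M d a) (h2 : leR M d b) : leR M d (meetR g hcar a b) :=
  (g.meet a (memCar hcar a) b (memCar hcar b)).choose_spec.2.2.2 d (memCar hcar d) h1 h2

theorem meetR_mem {a b : G} (ha : a ∈ M) (hb : b ∈ M) : meetR g hcar a b ∈ M := by
  rw [← one_leR_iff (M := M)]
  exact le_meetR g hcar (one_leR_iff.mpr ha) (one_leR_iff.mpr hb)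

/-- the join (right-lcm) of two elements -/
noncomputable def joinR (g : IsGarsideOn car M Δ) (hcar : car = ⊤) (a b : G) : G :=
  (g.join a (memCar hcar a) b (memCar hcar b)).choose

theorem le_joinR_left (a b : G) : leR M a (joinR g hcar a b) :=
  (g.join a (memCar hcar a) b (memCar hcar b)).choose_spec.2.1

theorem le_joinR_right (a b : G) : leR M b (joinR g hcar a b) :=
  (g.join a (memCar hcar a) b (memCar hcar b)).choose_spec.2.2.1

theorem joinR_le {a b d : G} (h1 : leR M a d) (h2 : leR M b d) : leR M (joinR g hcar a b) d :=
  (g.join a (memCar hcar a) b (memCar hcar b)).choose_spec.2.2.2 d (memCar hcar d) h1 h2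

theorem joinR_mem {a b : G} (ha : a ∈ M) : joinR g hcar a b ∈ M :=
  mem_of_leR ha (le_joinR_left g hcar a b)

/-- translation of the meet -/
theorem meetR_translate (a b x : G) :
    meetR g hcar (a * x) (b * x) = meetR g hcar a b * x := by
  apply leR_antisymm g
  · -- meet (ax) (bx) ≤ (meet a b) x
    have h1 : leR M (meetR g hcar (a * x) (b * x) * x⁻¹) a := by
      rw [← leR_mul_right_iff (M := M) x]
      simpa [mul_assoc] using meetR_le_left g hcar (a * x) (b * x)
    have h2 : leR M (meetR g hcar (a * x) (b * x) * x⁻¹) b := by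
      rw [← leR_mul_right_iff (M := M) x]
      simpa [mul_assoc] using meetR_le_right g hcar (a * x) (b * x)
    have := leR_mul_right (M := M) x (le_meetR g hcar h1 h2)
    simpa [mul_assoc] using this
  · exact le_meetR g hcar (leR_mul_right x (meetR_le_left g hcar a b))
      (leR_mul_right x (meetR_le_right g hcar a b))

theorem meetR_eq_one {a b : G} (ha : a ∈ M) (hb : b ∈ M)
    (h : ∀ d : G, leR M d a → leR M d b → d = 1) : meetR g hcar a b = 1 := by
  exact h _ (meetR_le_left g hcar a b) (meetR_le_right g hcar a b)

end Basic



section Noeth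

variable {car : Subgroup G} {M : Submonoid G} {Δ : G} (g : IsGarsideOn car M Δ)

/-- maximal length of a factorization into nontrivial factors -/
noncomputable def len (M : Submonoid G) (a : G) : ℕ :=
  sInf {n | ∀ l : List G, (∀ x ∈ l, x ∈ M ∧ x ≠ 1) → l.prod = a → l.length ≤ n}

include g in
theorem len_is_bound {a : G} (ha : a ∈ M) :
    ∀ l : List G, (∀ x ∈ l, x ∈ M ∧ x ≠ 1) → l.prod = a → l.length ≤ len M a := by
  obtain ⟨n, -, hn⟩ := g.noetherian a ha
  have h := Nat.sInf_mem
    (s := {n | ∀ l : List G, (∀ x ∈ l, x ∈ M ∧ x ≠ 1) → l.prod = a → l.length ≤ n}) ⟨n, hn⟩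
  exact h

include g in
theorem one_le_len {a : G} (ha : a ∈ M) (hne : a ≠ 1) : 1 ≤ len M a := by
  have := len_is_bound g ha [a] (by simp [ha, hne]) (by simp)
  simpa using this

include g in
theorem len_lt {y c : G} (hy : y ∈ M) (hc : c ∈ M) (hcne : c ≠ 1) :
    len M y < len M (y * c) := by
  have ha : y * c ∈ M := M.mul_mem hy hc
  have hane : y * c ≠ 1 := by
    intro h
    have h2 : y = c⁻¹ := mul_eq_one_iff_eq_inv.mp h
    exact hcne (g.units_trivial c hc (h2 ▸ hy))
  have h1 : len M y ≤ len M (y * c) - 1 := by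
    apply Nat.sInf_le
    intro l hl hp
    have := len_is_bound g ha (l ++ [c])
      (by
        intro x hx
        rcases List.mem_append.mp hx with h | h
        · exact hl x h
        · simp at h; subst h; exact ⟨hc, hcne⟩)
      (by simp [hp])
    simp at this
    omega
  calc len M y ≤ len M (y * c) - 1 := h1
    _ < len M (y * c) := Nat.sub_lt (one_le_len g ha hane) one_pos

include g in
theorem len_lt' {a c : G} (ha : a ∈ M) (hc : c ∈ M) (hcne : c ≠ 1) (hle : leR M c a) :
    len M (a * c⁻¹) < len M a := by
  have := len_lt g (y := a * c⁻¹) (c := c) hle hc hcne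
  simpa [mul_assoc] using this

include g in
theorem exists_simple_div {a : G} (ha : a ∈ M) (hne : a ≠ 1) :
    ∃ s ∈ DivR M Δ, s ≠ 1 ∧ leR M s a := by
  rw [← g.div_gen_monoid] at ha
  have key : ∀ x : G, x ∈ Submonoid.closure (DivR M Δ) →
      (x = 1 ∨ ∃ s ∈ DivR M Δ, s ≠ 1 ∧ leR M s x) := by
    intro x hx
    induction hx using Submonoid.closure_induction with
    | mem x hx =>
      by_cases h : x = 1
      · exact Or.inl h
      · exact Or.inr ⟨x, hx, h, leR_refl x⟩
    | one => exact Or.inl rfl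
    | mul x y hx hy ihx ihy =>
      rcases ihy with rfl | ⟨s, hs, hsne, hle⟩
      · simpa using ihx
      · refine Or.inr ⟨s, hs, hsne, leR_trans hle (leR_mul_left ?_ y)⟩
        rw [← g.div_gen_monoid]; exact hx
  rcases key a ha with h | h
  · exact absurd h hne
  · exact h

include g in
theorem exists_le_deltaPow (hcomm : ∀ x : G, Commute Δ x) {a : G} (ha : a ∈ M) :
    ∃ n : ℕ, leR M a (Δ ^ n) := by
  rw [← g.div_gen_monoid] at ha
  induction ha using Submonoid.closure_induction with
  | mem x hx => exact ⟨1, by simpa [leR] using hx.2⟩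
  | one => exact ⟨0, by simp [leR, Submonoid.one_mem]⟩
  | mul x y hx hy ihx ihy =>
    obtain ⟨n, hn⟩ := ihx
    obtain ⟨m, hm⟩ := ihy
    refine ⟨n + m, ?_⟩
    have hco : Commute (Δ ^ n) (Δ ^ m * y⁻¹) := ((hcomm _).pow_left n)
    have : (Δ ^ m * y⁻¹) * (Δ ^ n * x⁻¹) ∈ M := M.mul_mem hm hn
    have heq : (Δ ^ m * y⁻¹) * (Δ ^ n * x⁻¹) = Δ ^ (n + m) * (x * y)⁻¹ := by
      rw [pow_add, mul_inv_rev]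
      have hc2 := hco.eq
      calc Δ ^ m * y⁻¹ * (Δ ^ n * x⁻¹) = (Δ ^ m * y⁻¹ * Δ ^ n) * x⁻¹ := by group
        _ = (Δ ^ n * (Δ ^ m * y⁻¹)) * x⁻¹ := by rw [hc2]
        _ = Δ ^ n * Δ ^ m * (y⁻¹ * x⁻¹) := by group
    rwa [heq] at this

include g in
theorem deltaForm_aux (hΔ : Δ ≠ 1) :
    ∀ n : ℕ, ∀ a ∈ M, len M a ≤ n → ∃ c : G, ∃ s : ℕ,
      (c ∈ M ∧ ¬ leR M Δ c) ∧ a = c * Δ ^ s := by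
  intro n
  induction n with
  | zero =>
    intro a ha hlen
    by_cases h : leR M Δ a
    · exfalso
      have hy : a * Δ⁻¹ ∈ M := h
      have := len_lt g hy g.delta_mem hΔ
      simp only [inv_mul_cancel_right] at this
      omega
    · exact ⟨a, 0, ⟨ha, h⟩, by simp⟩
  | succ n ih =>
    intro a ha hlen
    by_cases h : leR M Δ a
    · have hy : a * Δ⁻¹ ∈ M := h
      have hlt : len M (a * Δ⁻¹) < len M a := by
        have := len_lt g hy g.delta_mem hΔ
        simpa [mul_assoc] using this
      obtain ⟨c, s, hc, he⟩ := ih (a * Δ⁻¹) hy (by omega)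
      refine ⟨c, s + 1, hc, ?_⟩
      have : a = (a * Δ⁻¹) * Δ := by group
      rw [this, he, pow_succ, mul_assoc]
    · exact ⟨a, 0, ⟨ha, h⟩, by simp⟩

include g in
theorem deltaForm (hΔ : Δ ≠ 1) {a : G} (ha : a ∈ M) :
    ∃ c : G, ∃ s : ℕ, (c ∈ M ∧ ¬ leR M Δ c) ∧ a = c * Δ ^ s :=
  deltaForm_aux g hΔ (len M a) a ha le_rfl

theorem zpow_mem_of_nonneg (hΔ : Δ ∈ M) {t : ℤ} (ht : 0 ≤ t) : Δ ^ t ∈ M := by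
  obtain ⟨n, rfl⟩ := Int.eq_ofNat_of_zero_le ht
  rw [zpow_natCast]
  exact pow_mem hΔ n

include g in
theorem unmovable_unique {c c' : G} {t : ℤ} (h : c ∈ M ∧ ¬ leR M Δ c)
    (h' : c' ∈ M ∧ ¬ leR M Δ c') (he : c * Δ ^ t = c') : c = c' ∧ t = 0 := by
  rcases lt_trichotomy t 0 with ht | ht | ht
  · exfalso
    apply h.2
    have hmem : Δ ^ (-t - 1) ∈ M := zpow_mem_of_nonneg g.delta_mem (by omega)
    have : c * Δ⁻¹ = c' * Δ ^ (-t - 1) := by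
      rw [← he]; group
    show c * Δ⁻¹ ∈ M
    rw [this]
    exact M.mul_mem h'.1 hmem
  · subst ht; simp at he; exact ⟨he, rfl⟩
  · exfalso
    apply h'.2
    have hmem : Δ ^ (t - 1) ∈ M := zpow_mem_of_nonneg g.delta_mem (by omega)
    have : c' * Δ⁻¹ = c * Δ ^ (t - 1) := by
      rw [← he]; group
    show c' * Δ⁻¹ ∈ M
    rw [this]
    exact M.mul_mem h.1 hmem

end Noeth

section Parabolic

variable {car : Subgroup G} {M : Submonoid G} {Δ : G} (g : IsGarsideOn car M Δ)
  (hcar : car = ⊤) (hcomm : ∀ x : G, Commute Δ x) {δ : G} (hp : IsParabolic M Δ δ)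

theorem deltaPow_comm (hcomm : ∀ x : G, Commute Δ x) (k : ℕ) (w : G) :
    Δ ^ k * w = w * Δ ^ k := ((hcomm w).pow_left k).eq

theorem par_le : parM M δ ≤ M :=
  Submonoid.closure_le.mpr fun _ hx => hx.1

theorem div_subset_P {s : G} (hs : s ∈ DivR M δ) : s ∈ parM M δ :=
  Submonoid.subset_closure hs

include hp in
theorem delta_mem_div : δ ∈ DivR M δ := ⟨hp.mem, leR_refl δ⟩

include hp in
theorem delta_mem_P : δ ∈ parM M δ := div_subset_P (delta_mem_div hp)

include hp in
theorem compl_mem {s : G} (hs : s ∈ DivR M δ) : δ * s⁻¹ ∈ DivR M δ := by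
  have h1 : δ * s⁻¹ ∈ M := hs.2
  have h2 : (δ * s⁻¹)⁻¹ * δ ∈ M := by
    have e : (δ * s⁻¹)⁻¹ * δ = s := by group
    rw [e]; exact hs.1
  have h3 : δ * s⁻¹ ∈ DivL M δ := ⟨h1, h2⟩
  rw [← hp.balanced] at h3
  exact h3

include hp in
theorem compl_mem_left {s : G} (hs : s ∈ DivR M δ) : s⁻¹ * δ ∈ DivR M δ := by
  rw [hp.balanced] at hs
  refine ⟨hs.2, ?_⟩
  show δ * (s⁻¹ * δ)⁻¹ ∈ M
  have e : δ * (s⁻¹ * δ)⁻¹ = s := by group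
  rw [e]; exact hs.1

include hp in
theorem conj_div_right {s : G} (hs : s ∈ DivR M δ) : δ⁻¹ * s * δ ∈ DivR M δ := by
  have hv := compl_mem_left hp hs
  have e : δ⁻¹ * s * δ = (s⁻¹ * δ)⁻¹ * δ := by group
  rw [e]
  exact compl_mem_left hp hv

include hp in
theorem conj_div_left {s : G} (hs : s ∈ DivR M δ) : δ * s * δ⁻¹ ∈ DivR M δ := by
  have hu := compl_mem hp hs
  have e : δ * s * δ⁻¹ = δ * (δ * s⁻¹)⁻¹ := by group
  rw [e]
  exact compl_mem hp hu

include hp in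
theorem conj_P_left {x : G} (hx : x ∈ parM M δ) : δ * x * δ⁻¹ ∈ parM M δ := by
  induction hx using Submonoid.closure_induction with
  | mem y hy => exact div_subset_P (conj_div_left hp hy)
  | one => simpa using Submonoid.one_mem (parM M δ)
  | mul y z hy hz ihy ihz =>
    have e : δ * (y * z) * δ⁻¹ = (δ * y * δ⁻¹) * (δ * z * δ⁻¹) := by group
    rw [e]; exact Submonoid.mul_mem _ ihy ihz

include hp in
theorem conj_P_right {x : G} (hx : x ∈ parM M δ) : δ⁻¹ * x * δ ∈ parM M δ := by
  induction hx using Submonoid.closure_induction with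
  | mem y hy => exact div_subset_P (conj_div_right hp hy)
  | one => simpa using Submonoid.one_mem (parM M δ)
  | mul y z hy hz ihy ihz =>
    have e : δ⁻¹ * (y * z) * δ = (δ⁻¹ * y * δ) * (δ⁻¹ * z * δ) := by group
    rw [e]; exact Submonoid.mul_mem _ ihy ihz

include hp in
theorem conj_P_pow {x : G} (n : ℕ) (hx : x ∈ parM M δ) :
    δ ^ n * x * (δ ^ n)⁻¹ ∈ parM M δ := by
  induction n with
  | zero => simpa using hx
  | succ n ih =>
    have e : δ ^ (n+1) * x * (δ ^ (n+1))⁻¹ = δ * (δ ^ n * x * (δ ^ n)⁻¹) * δ⁻¹ := by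
      rw [pow_succ']; group
    rw [e]
    exact conj_P_left hp ih

include hp in
theorem conj_P_pow_neg {x : G} (n : ℕ) (hx : x ∈ parM M δ) :
    (δ ^ n)⁻¹ * x * δ ^ n ∈ parM M δ := by
  induction n with
  | zero => simpa using hx
  | succ n ih =>
    have e : (δ ^ (n+1))⁻¹ * x * δ ^ (n+1) = δ⁻¹ * ((δ ^ n)⁻¹ * x * δ ^ n) * δ := by
      rw [pow_succ']; group
    rw [e]
    exact conj_P_right hp ih

include hp in
theorem D1 {v : G} (hv : v ∈ parM M δ) :
    ∃ m : ℕ, leR M v (δ ^ m) ∧ δ ^ m * v⁻¹ ∈ parM M δ := by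
  induction hv using Submonoid.closure_induction with
  | mem s hs =>
    refine ⟨1, ?_, ?_⟩
    · show δ ^ 1 * s⁻¹ ∈ M
      rw [pow_one]; exact hs.2
    · rw [pow_one]; exact div_subset_P (compl_mem hp hs)
  | one => exact ⟨0, by simp [leR, Submonoid.one_mem], by simpa using Submonoid.one_mem _⟩
  | mul x y hx hy ihx ihy =>
    obtain ⟨n, hxn, hxP⟩ := ihx
    obtain ⟨m, hym, hyP⟩ := ihy
    have key : δ ^ (n + m) * (x * y)⁻¹ = (δ ^ n * (δ ^ m * y⁻¹) * (δ ^ n)⁻¹) * (δ ^ n * x⁻¹) := by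
      rw [pow_add]; group
    have hmem : δ ^ (n + m) * (x * y)⁻¹ ∈ parM M δ := by
      rw [key]
      exact Submonoid.mul_mem _ (conj_P_pow hp n hyP) hxP
    exact ⟨n + m, par_le hmem, hmem⟩

include g hp in
theorem E2 {d : G} (hd : d ∈ M) (h1 : leR M d (Δ * δ⁻¹)) (h2 : leR M d δ) : d = 1 := by
  have hdδ : leR M (d * δ) Δ := by
    show Δ * (d * δ)⁻¹ ∈ M
    have e : Δ * (d * δ)⁻¹ = (Δ * δ⁻¹) * d⁻¹ := by group
    rw [e]; exact h1
  have hdP : d ∈ parM M δ := div_subset_P ⟨hd, h2⟩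
  have hmem : d * δ ∈ DivR M δ := by
    rw [hp.div_eq]
    exact ⟨⟨M.mul_mem hd hp.mem, hdδ⟩, Submonoid.mul_mem _ hdP (delta_mem_P hp)⟩
  have : δ * (d * δ)⁻¹ ∈ M := hmem.2
  have e : δ * (d * δ)⁻¹ = d⁻¹ := by group
  rw [e] at this
  exact inv_inv d ▸ g.units_trivial d hd this

include g hp in
theorem theta_mem_M : Δ * δ⁻¹ ∈ M := by
  have h : δ ∈ DivR M Δ := by
    have := delta_mem_div hp
    rw [hp.div_eq] at this
    exact this.1
  exact h.2

include g hcar hp in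
theorem C2 {d : G} (hd : d ∈ M) (h1 : leR M d Δ) (h2 : leR M d (δ ^ 2)) : leR M d δ := by
  set d₁ := meetR g hcar d δ with hd₁def
  have hd₁div : d₁ ∈ DivR M δ := ⟨meetR_mem g hcar hd hp.mem, meetR_le_right g hcar d δ⟩
  have hu : δ * d₁⁻¹ ∈ DivR M δ := compl_mem hp hd₁div
  set y := d * d₁⁻¹ with hydef
  have hy1 : leR M y (Δ * d₁⁻¹) := leR_mul_right d₁⁻¹ h1
  have hy2 : leR M y (δ ^ 2 * d₁⁻¹) := leR_mul_right d₁⁻¹ h2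
  -- Δ * d₁⁻¹ = (Δ * δ⁻¹) * (δ * d₁⁻¹), δ^2 * d₁⁻¹ = δ * (δ * d₁⁻¹)
  have e1 : Δ * d₁⁻¹ = (Δ * δ⁻¹) * (δ * d₁⁻¹) := by group
  have e2 : δ ^ 2 * d₁⁻¹ = δ * (δ * d₁⁻¹) := by rw [pow_two]; group
  have hmeet1 : meetR g hcar (Δ * δ⁻¹) δ = 1 := by
    apply E2 g hp (meetR_mem g hcar (theta_mem_M g hp) hp.mem)
      (meetR_le_left g hcar _ _) (meetR_le_right g hcar _ _)
  have hy3 : leR M y (meetR g hcar ((Δ * δ⁻¹) * (δ * d₁⁻¹)) (δ * (δ * d₁⁻¹))) := by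
    apply le_meetR g hcar
    · rw [← e1]; exact hy1
    · rw [← e2]; exact hy2
  rw [meetR_translate g hcar, hmeet1, one_mul] at hy3
  -- hy3 : leR M y (δ * d₁⁻¹)
  show δ * d⁻¹ ∈ M
  have e3 : δ * d⁻¹ = (δ * d₁⁻¹) * y⁻¹ := by rw [hydef]; group
  rw [e3]
  exact hy3

include g hcar hcomm hp in
theorem headR {x y d : G} (hx : x ∈ M) (hy : y ∈ M) (hd1 : leR M d (y * x)) (hd2 : leR M d Δ) :
    leR M d (meetR g hcar y Δ * x) := by
  set J := joinR g hcar d x with hJ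
  have hJyx : leR M J (y * x) := joinR_le g hcar hd1 (leR_mul_left hy x)
  have hf1 : leR M (J * x⁻¹) y := by
    show y * (J * x⁻¹)⁻¹ ∈ M
    have e : y * (J * x⁻¹)⁻¹ = (y * x) * J⁻¹ := by group
    rw [e]; exact hJyx
  have hdΔx : leR M d (Δ * x) := by
    show Δ * x * d⁻¹ ∈ M
    have e : Δ * x * d⁻¹ = x * (Δ * d⁻¹) := by rw [(hcomm x).eq]; group
    rw [e]; exact M.mul_mem hx hd2
  have hJΔx : leR M J (Δ * x) := joinR_le g hcar hdΔx (leR_mul_left g.delta_mem x)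
  have hf2 : leR M (J * x⁻¹) Δ := by
    show Δ * (J * x⁻¹)⁻¹ ∈ M
    have e : Δ * (J * x⁻¹)⁻¹ = (Δ * x) * J⁻¹ := by group
    rw [e]; exact hJΔx
  have hfm : leR M (J * x⁻¹) (meetR g hcar y Δ) := le_meetR g hcar hf1 hf2
  have hdJ : leR M d J := le_joinR_left g hcar d x
  have hJle : leR M J (meetR g hcar y Δ * x) := by
    have := leR_mul_right (M := M) x hfm
    have e : J * x⁻¹ * x = J := by group
    rwa [e] at this
  exact leR_trans hdJ hJle

include g hcar hcomm hp in
theorem Cn (n : ℕ) : ∀ {d : G}, d ∈ M → leR M d Δ → leR M d (δ ^ n) → leR M d δ := by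
  induction n with
  | zero =>
    intro d hd h1 h2
    have : d⁻¹ ∈ M := by simpa [leR] using h2
    have hd1 : d = 1 := g.units_trivial d hd this
    subst hd1
    simpa [leR] using hp.mem
  | succ n ih =>
    intro d hd h1 h2
    rcases Nat.eq_zero_or_pos n with rfl | hn
    · simpa using h2
    -- d ≤ δ^n * δ, d ≤ Δ ⇒ d ≤ (δ^n ∧ Δ) * δ
    have h3 : leR M d (meetR g hcar (δ ^ n) Δ * δ) := by
      apply headR g hcar hcomm hp hp.mem (pow_mem hp.mem n) _ h1
      rwa [← pow_succ]
    set e := meetR g hcar (δ ^ n) Δ with hedef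
    have he : leR M e δ := ih (meetR_mem g hcar (pow_mem hp.mem n) g.delta_mem)
      (meetR_le_right g hcar _ _) (meetR_le_left g hcar _ _)
    have h4 : leR M (e * δ) (δ ^ 2) := by
      show δ ^ 2 * (e * δ)⁻¹ ∈ M
      have eq : δ ^ 2 * (e * δ)⁻¹ = δ * e⁻¹ := by rw [pow_two]; group
      rw [eq]; exact he
    exact C2 g hcar hp hd h1 (leR_trans h3 h4)

include hcomm in
theorem pullL (k : ℕ) (w : G) : Δ ^ k * w = w * Δ ^ k := ((hcomm w).pow_left k).eq

include hcomm in
theorem pullLi (k : ℕ) (w : G) : (Δ ^ k)⁻¹ * w = w * (Δ ^ k)⁻¹ :=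
  (((hcomm w).pow_left k).inv_left).eq

include g hcar hcomm in
theorem NFdelta {c : G} {n : ℕ} (hc : c ∈ M) (h : leR M c (Δ ^ (n + 1))) :
    leR M (c * (meetR g hcar c Δ)⁻¹) (Δ ^ n) := by
  set z := Δ ^ (n + 1) * c⁻¹ with hzdef
  have hz : z ∈ M := h
  set K := meetR g hcar z⁻¹ (Δ ^ n)⁻¹ with hKdef
  have hK1 : z⁻¹ * K⁻¹ ∈ M := meetR_le_left g hcar z⁻¹ (Δ ^ n)⁻¹
  have hK2 : (Δ ^ n)⁻¹ * K⁻¹ ∈ M := meetR_le_right g hcar z⁻¹ (Δ ^ n)⁻¹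
  -- Claim A : K * (Δ^n * z) ∈ M
  have hA : K * (Δ ^ n * z) ∈ M := by
    have hd1 : leR M (Δ ^ n * z)⁻¹ z⁻¹ := by
      show z⁻¹ * ((Δ ^ n * z)⁻¹)⁻¹ ∈ M
      rw [inv_inv, pullL hcomm n z, ← mul_assoc, inv_mul_cancel, one_mul]
      exact pow_mem g.delta_mem n
    have hd2 : leR M (Δ ^ n * z)⁻¹ (Δ ^ n)⁻¹ := by
      show (Δ ^ n)⁻¹ * ((Δ ^ n * z)⁻¹)⁻¹ ∈ M
      rw [inv_inv, ← mul_assoc, inv_mul_cancel, one_mul]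
      exact hz
    have h3 := le_meetR g hcar hd1 hd2
    rw [← hKdef] at h3
    simpa [leR] using h3
  set g₁ := meetR g hcar c Δ with hg₁def
  have hg'c : leR M (Δ ^ (n + 1) * K) c := by
    show c * (Δ ^ (n + 1) * K)⁻¹ ∈ M
    have e : c * (Δ ^ (n + 1) * K)⁻¹ = z⁻¹ * K⁻¹ := by
      rw [hzdef]
      have h1 : (Δ ^ (n+1) * c⁻¹)⁻¹ * K⁻¹ = c * ((Δ ^ (n+1))⁻¹ * K⁻¹) := by group
      rw [h1, pullLi hcomm (n+1) K⁻¹]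
      group
    rw [e]; exact hK1
  have hg'Δ : leR M (Δ ^ (n + 1) * K) Δ := by
    show Δ * (Δ ^ (n + 1) * K)⁻¹ ∈ M
    have e : Δ * (Δ ^ (n + 1) * K)⁻¹ = (Δ ^ n)⁻¹ * K⁻¹ := by
      calc Δ * (Δ ^ (n + 1) * K)⁻¹ = Δ * (K⁻¹ * (Δ ^ (n+1))⁻¹) := by group
        _ = Δ * ((Δ ^ (n+1))⁻¹ * K⁻¹) := by rw [← pullLi hcomm (n+1) K⁻¹]
        _ = (Δ * (Δ ^ (n+1))⁻¹) * K⁻¹ := by rw [← mul_assoc]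
        _ = (Δ ^ n)⁻¹ * K⁻¹ := by
            rw [show Δ * (Δ ^ (n+1))⁻¹ = (Δ ^ n)⁻¹ from by rw [pow_succ']; group]
    rw [e]; exact hK2
  have hg'g₁ : leR M (Δ ^ (n + 1) * K) g₁ := le_meetR g hcar hg'c hg'Δ
  have hd₀1 : leR M (g₁ * (Δ ^ (n + 1))⁻¹) z⁻¹ := by
    show z⁻¹ * (g₁ * (Δ ^ (n + 1))⁻¹)⁻¹ ∈ M
    have e : z⁻¹ * (g₁ * (Δ ^ (n + 1))⁻¹)⁻¹ = c * g₁⁻¹ := by rw [hzdef]; group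
    rw [e]; exact meetR_le_left g hcar c Δ
  have hd₀2 : leR M (g₁ * (Δ ^ (n + 1))⁻¹) (Δ ^ n)⁻¹ := by
    show (Δ ^ n)⁻¹ * (g₁ * (Δ ^ (n + 1))⁻¹)⁻¹ ∈ M
    have e : (Δ ^ n)⁻¹ * (g₁ * (Δ ^ (n + 1))⁻¹)⁻¹ = Δ * g₁⁻¹ := by
      rw [pow_succ']; group
    rw [e]; exact meetR_le_right g hcar c Δ
  have hd₀K : leR M (g₁ * (Δ ^ (n + 1))⁻¹) K := le_meetR g hcar hd₀1 hd₀2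
  have hm2 : (K * (g₁ * (Δ ^ (n + 1))⁻¹)⁻¹)⁻¹ ∈ M := by
    have e : (K * (g₁ * (Δ ^ (n + 1))⁻¹)⁻¹)⁻¹ = g₁ * (Δ ^ (n + 1) * K)⁻¹ := by
      have h1 : (K * (g₁ * (Δ ^ (n + 1))⁻¹)⁻¹)⁻¹ = g₁ * ((Δ ^ (n+1))⁻¹ * K⁻¹) := by group
      rw [h1, pullLi hcomm (n+1) K⁻¹, mul_inv_rev]
    rw [e]; exact hg'g₁
  have hunit : K * (g₁ * (Δ ^ (n + 1))⁻¹)⁻¹ = 1 := g.units_trivial _ hd₀K hm2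
  have hK' : K = g₁ * (Δ ^ (n + 1))⁻¹ := mul_inv_eq_one.mp hunit
  have hg₁eq : g₁ = Δ ^ (n + 1) * K := by
    rw [hK', pullL hcomm (n+1)]
    group
  show Δ ^ n * (c * g₁⁻¹)⁻¹ ∈ M
  have e : Δ ^ n * (c * g₁⁻¹)⁻¹ = K * (Δ ^ n * z) := by
    rw [hg₁eq, hzdef]
    have h1 : Δ ^ n * (c * (Δ ^ (n+1) * K)⁻¹)⁻¹ = Δ ^ (n + (n+1)) * (K * c⁻¹) := by
      rw [pow_add]; group
    have h2 : K * (Δ ^ n * (Δ ^ (n+1) * c⁻¹)) = K * (Δ ^ (n + (n+1)) * c⁻¹) := by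
      rw [pow_add]; group
    rw [h1, h2, pullL hcomm (n + (n+1)) (K * c⁻¹), pullL hcomm (n + (n+1)) c⁻¹]
    group
  rw [e]; exact hA

include hp in
theorem exists_P_decomp {v : G} (hv : v ∈ parM M δ) :
    v = 1 ∨ ∃ t ∈ DivR M δ, t ≠ 1 ∧ ∃ w ∈ parM M δ, v = w * t := by
  induction hv using Submonoid.closure_induction with
  | mem s hs =>
    by_cases h : s = 1
    · exact Or.inl h
    · exact Or.inr ⟨s, hs, h, 1, Submonoid.one_mem _, (one_mul s).symm⟩
  | one => exact Or.inl rfl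
  | mul x y hx hy ihx ihy =>
    rcases ihy with rfl | ⟨t, ht, htne, w, hw, rfl⟩
    · rw [mul_one]; exact ihx
    · exact Or.inr ⟨t, ht, htne, x * w, Submonoid.mul_mem _ hx hw, by rw [mul_assoc]⟩

include g hcar hp in
theorem P2s : ∀ n : ℕ, ∀ v ∈ parM M δ, len M v ≤ n →
    ∀ s ∈ DivR M δ, leR M s v → v * s⁻¹ ∈ parM M δ := by
  intro n
  induction n with
  | zero =>
    intro v hv hlen s hs hsv
    have hv1 : v = 1 := by
      by_contra hne
      have := one_le_len g (par_le hv) hne; omega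
    subst hv1
    have h2 : s⁻¹ ∈ M := by simpa [leR] using hsv
    have hs1 : s = 1 := g.units_trivial s hs.1 h2
    subst hs1; simpa using Submonoid.one_mem (parM M δ)
  | succ n ih =>
    intro v hv hlen s hs hsv
    rcases exists_P_decomp hp hv with rfl | ⟨t, ht, htne, w, hw, rfl⟩
    · have h2 : s⁻¹ ∈ M := by simpa [leR] using hsv
      have hs1 : s = 1 := g.units_trivial s hs.1 h2
      subst hs1; simpa using Submonoid.one_mem (parM M δ)
    · have hwM : w ∈ M := par_le hw
      have htM : t ∈ M := ht.1
      have hlenw : len M w < len M (w * t) := len_lt g hwM htM htne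
      set j := joinR g hcar s t with hj
      have hjδ : leR M j δ := joinR_le g hcar hs.2 ht.2
      have hjM : j ∈ M := joinR_mem g hcar hs.1
      have hjdiv : j ∈ DivR M δ := ⟨hjM, hjδ⟩
      have htj : leR M t j := le_joinR_right g hcar s t
      have hsj : leR M s j := le_joinR_left g hcar s t
      have hjv : leR M j (w * t) := joinR_le g hcar hsv (leR_mul_left hwM t)
      have hfdiv : j * t⁻¹ ∈ DivR M δ := by
        refine ⟨htj, ?_⟩
        have htc : δ * t⁻¹ ∈ DivR M δ := compl_mem hp ht
        have h1 : leR M (j * t⁻¹) (δ * t⁻¹) := leR_mul_right t⁻¹ hjδ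
        exact leR_trans h1 htc.2
      have hfw : leR M (j * t⁻¹) w := by
        show w * (j * t⁻¹)⁻¹ ∈ M
        have e : w * (j * t⁻¹)⁻¹ = (w * t) * j⁻¹ := by group
        rw [e]; exact hjv
      have hwf : w * (j * t⁻¹)⁻¹ ∈ parM M δ := ih w hw (by omega) (j * t⁻¹) hfdiv hfw
      have hjs : j * s⁻¹ ∈ DivR M δ := by
        refine ⟨hsj, ?_⟩
        have hsc : δ * s⁻¹ ∈ DivR M δ := compl_mem hp hs
        have h1 : leR M (j * s⁻¹) (δ * s⁻¹) := leR_mul_right s⁻¹ hjδ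
        exact leR_trans h1 hsc.2
      have e : (w * t) * s⁻¹ = (w * (j * t⁻¹)⁻¹) * (j * s⁻¹) := by group
      rw [e]
      exact Submonoid.mul_mem _ hwf (div_subset_P hjs)

include g hcar hcomm hp in
theorem P0 : ∀ n : ℕ, ∀ c ∈ M, len M c ≤ n → ∀ v ∈ parM M δ, leR M c v →
    c ∈ parM M δ ∧ v * c⁻¹ ∈ parM M δ := by
  intro n
  induction n with
  | zero =>
    intro c hc hlen v hv hcv
    have hc1 : c = 1 := by
      by_contra hne
      have := one_le_len g hc hne; omega
    subst hc1
    exact ⟨Submonoid.one_mem _, by simpa using hv⟩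
  | succ n ih =>
    intro c hc hlen v hv hcv
    by_cases hcne : c = 1
    · subst hcne
      exact ⟨Submonoid.one_mem _, by simpa using hv⟩
    obtain ⟨m, hvm, -⟩ := D1 hp hv
    set c₁ := meetR g hcar c Δ with hc₁def
    have hc₁M : c₁ ∈ M := meetR_mem g hcar hc g.delta_mem
    have hc₁Δ : leR M c₁ Δ := meetR_le_right g hcar c Δ
    have hc₁c : leR M c₁ c := meetR_le_left g hcar c Δ
    have hc₁δm : leR M c₁ (δ ^ m) := leR_trans (leR_trans hc₁c hcv) hvm
    have hc₁δ : leR M c₁ δ := Cn g hcar hcomm hp m hc₁M hc₁Δ hc₁δm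
    have hc₁div : c₁ ∈ DivR M δ := ⟨hc₁M, hc₁δ⟩
    have hc₁ne : c₁ ≠ 1 := by
      obtain ⟨s, hs, hsne, hsc⟩ := exists_simple_div g hc hcne
      intro h1
      have h2 : leR M s c₁ := le_meetR g hcar hsc hs.2
      rw [h1] at h2
      have h3 : s⁻¹ ∈ M := by simpa [leR] using h2
      exact hsne (g.units_trivial s hs.1 h3)
    have hyM : c * c₁⁻¹ ∈ M := hc₁c
    have hylen : len M (c * c₁⁻¹) < len M c := len_lt' g hc hc₁M hc₁ne hc₁c
    have hv' : v * c₁⁻¹ ∈ parM M δ :=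
      P2s g hcar hp (len M v) v hv le_rfl c₁ hc₁div (leR_trans hc₁c hcv)
    have hyv' : leR M (c * c₁⁻¹) (v * c₁⁻¹) := leR_mul_right c₁⁻¹ hcv
    obtain ⟨hyP, hcompP⟩ := ih (c * c₁⁻¹) hyM (by omega) (v * c₁⁻¹) hv' hyv'
    constructor
    · have e : c = (c * c₁⁻¹) * c₁ := by group
      rw [e]; exact Submonoid.mul_mem _ hyP (div_subset_P hc₁div)
    · have e : v * c⁻¹ = (v * c₁⁻¹) * (c * c₁⁻¹)⁻¹ := by group
      rw [e]; exact hcompP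

include g hcar hcomm hp in
theorem P0' {c v : G} (hc : c ∈ M) (hv : v ∈ parM M δ) (hcv : leR M c v) :
    c ∈ parM M δ ∧ v * c⁻¹ ∈ parM M δ :=
  P0 g hcar hcomm hp (len M c) c hc le_rfl v hv hcv

include g hcar hcomm hp in
theorem leR_deltaPow_mono {m m' : ℕ} (h : m ≤ m') : leR M (δ ^ m) (δ ^ m') := by
  show δ ^ m' * (δ ^ m)⁻¹ ∈ M
  obtain ⟨k, rfl⟩ := Nat.exists_eq_add_of_le h
  have e : δ ^ (m + k) * (δ ^ m)⁻¹ = δ ^ k := by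
    rw [add_comm, pow_add]; group
  rw [e]; exact pow_mem hp.mem k

include g hcar hcomm hp in
theorem P1 {b b' : G} (hb : b ∈ parM M δ) (hb' : b' ∈ parM M δ) :
    joinR g hcar b b' ∈ parM M δ := by
  obtain ⟨m, hm, -⟩ := D1 hp hb
  obtain ⟨m', hm', -⟩ := D1 hp hb'
  have h1 : leR M b (δ ^ (m + m')) :=
    leR_trans hm (leR_deltaPow_mono g hcar hcomm hp (Nat.le_add_right m m'))
  have h2 : leR M b' (δ ^ (m + m')) :=
    leR_trans hm' (leR_deltaPow_mono g hcar hcomm hp (Nat.le_add_left m' m))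
  have h3 : leR M (joinR g hcar b b') (δ ^ (m + m')) := joinR_le g hcar h1 h2
  exact (P0' g hcar hcomm hp (joinR_mem g hcar (par_le hb))
    (pow_mem (delta_mem_P hp) (m + m')) h3).1

include g hcar hcomm hp in
theorem L8par : ∀ e : ℕ, ∀ x ∈ parM M δ, leR M x (Δ ^ e) →
    leR M x (δ ^ e) ∧ δ ^ e * x⁻¹ ∈ parM M δ := by
  intro e
  induction e with
  | zero =>
    intro x hx hle
    have h2 : x⁻¹ ∈ M := by simpa [leR] using hle
    have hx1 : x = 1 := g.units_trivial x (par_le hx) h2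
    subst hx1
    exact ⟨by rw [pow_zero]; exact leR_refl 1, by simpa using Submonoid.one_mem _⟩
  | succ e ih =>
    intro x hx hle
    set x₁ := meetR g hcar x Δ with hx₁def
    have hx₁M : x₁ ∈ M := meetR_mem g hcar (par_le hx) g.delta_mem
    have hx₁x : leR M x₁ x := meetR_le_left g hcar x Δ
    obtain ⟨hx₁P, hyP⟩ := P0' g hcar hcomm hp hx₁M hx hx₁x
    have hx₁div : x₁ ∈ DivR M δ := by
      rw [hp.div_eq]
      exact ⟨⟨hx₁M, meetR_le_right g hcar x Δ⟩, hx₁P⟩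
    have hyΔ : leR M (x * x₁⁻¹) (Δ ^ e) := NFdelta g hcar hcomm (par_le hx) hle
    obtain ⟨hyδ, hzP⟩ := ih (x * x₁⁻¹) hyP hyΔ
    have key : δ ^ (e + 1) * x⁻¹ ∈ parM M δ := by
      have e1 : δ ^ (e + 1) * x⁻¹ =
          (δ ^ e * (δ * x₁⁻¹) * (δ ^ e)⁻¹) * (δ ^ e * (x * x₁⁻¹)⁻¹) := by
        rw [pow_succ]; group
      rw [e1]
      exact Submonoid.mul_mem _
        (conj_P_pow hp e (div_subset_P (compl_mem hp hx₁div))) hzP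
    exact ⟨par_le key, key⟩

end Parabolic

section SettingLemmas

variable (S : Setting G) (hcar : S.car = ⊤)

include hcar in
theorem Scomm : ∀ x : G, Commute S.Δ x := fun x => S.delta_central x (by simp [hcar])

theorem delta_ne_one : S.Δ ≠ 1 := by
  intro h
  apply S.M1_ne
  have hM : S.M = ⊥ := by
    rw [← S.garside.div_gen_monoid]
    apply le_antisymm
    · apply Submonoid.closure_le.mpr
      intro x hx
      have h2 : x⁻¹ ∈ S.M := by
        have := hx.2
        rw [h] at this
        simpa [leR] using this
      simp [Submonoid.mem_bot]
      exact S.garside.units_trivial x hx.1 h2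
    · exact bot_le
  apply le_antisymm
  · exact par_le
  · rw [hM]; exact bot_le

theorem delta1_mem : S.δ1 ∈ S.M := S.par1.mem

theorem theta_eq : S.theta = S.Δ * S.δ1⁻¹ := rfl

include hcar in
theorem theta_mem : S.theta ∈ S.M := theta_mem_M S.garside S.par1

include hcar in
theorem theta_delta1_comm : S.theta * S.δ1 = S.δ1 * S.theta := by
  rw [theta_eq]
  have h := (Scomm S hcar S.δ1).eq
  calc S.Δ * S.δ1⁻¹ * S.δ1 = S.Δ := by group
    _ = S.δ1 * S.Δ * S.δ1⁻¹ := by rw [← h]; group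
    _ = S.δ1 * (S.Δ * S.δ1⁻¹) := by group

include hcar in
theorem delta_eq_theta_delta1 : S.Δ = S.theta * S.δ1 := by rw [theta_eq]; group

include hcar in
theorem deltaPow_eq (e : ℕ) : S.Δ ^ e = S.theta ^ e * S.δ1 ^ e := by
  rw [delta_eq_theta_delta1 S hcar]
  exact Commute.mul_pow (theta_delta1_comm S hcar) e

include hcar in
theorem theta_pow_mem (e : ℕ) : S.theta ^ e ∈ S.M := pow_mem (theta_mem S hcar) e

include hcar in
theorem theta_conj (x : G) : S.theta * x * S.theta⁻¹ = S.δ1⁻¹ * x * S.δ1 := by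
  rw [theta_eq]
  have h1 := (Scomm S hcar (S.δ1⁻¹ * x * S.δ1)).eq
  calc S.Δ * S.δ1⁻¹ * x * (S.Δ * S.δ1⁻¹)⁻¹
      = S.Δ * (S.δ1⁻¹ * x * S.δ1) * S.Δ⁻¹ := by group
    _ = (S.δ1⁻¹ * x * S.δ1) * S.Δ * S.Δ⁻¹ := by rw [h1]
    _ = S.δ1⁻¹ * x * S.δ1 := by group

theorem conj_M1_zpow (j : ℤ) {x : G} (hx : x ∈ parM S.M S.δ1) :
    S.δ1 ^ j * x * (S.δ1 ^ j)⁻¹ ∈ parM S.M S.δ1 := by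
  rcases j with n | n
  · have := conj_P_pow S.par1 n hx
    simpa [zpow_natCast] using this
  · have := conj_P_pow_neg S.par1 (n + 1) hx
    simpa [zpow_negSucc] using this

theorem conj_M1_zpow' (j : ℤ) {x : G} (hx : x ∈ parM S.M S.δ1) :
    (S.δ1 ^ j)⁻¹ * x * S.δ1 ^ j ∈ parM S.M S.δ1 := by
  have := conj_M1_zpow S (-j) hx
  simpa [zpow_neg] using this

include hcar in
theorem L8 {e : ℕ} {z : G} (hz : z ∈ parM S.M S.δ1) (hle : leR S.M z (S.theta ^ e)) :
    z = 1 := by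
  have hx : z * S.δ1 ^ e ∈ parM S.M S.δ1 :=
    Submonoid.mul_mem _ hz (pow_mem (delta_mem_P S.par1) e)
  have hle2 : leR S.M (z * S.δ1 ^ e) (S.Δ ^ e) := by
    show S.Δ ^ e * (z * S.δ1 ^ e)⁻¹ ∈ S.M
    have e1 : S.Δ ^ e * (z * S.δ1 ^ e)⁻¹ = S.theta ^ e * z⁻¹ := by
      rw [deltaPow_eq S hcar]; group
    rw [e1]; exact hle
  obtain ⟨h1, -⟩ := L8par S.garside hcar (Scomm S hcar) S.par1 e (z * S.δ1 ^ e) hx hle2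
  have h2 : S.δ1 ^ e * (z * S.δ1 ^ e)⁻¹ ∈ S.M := h1
  have e2 : S.δ1 ^ e * (z * S.δ1 ^ e)⁻¹ = z⁻¹ := by group
  rw [e2] at h2
  exact S.garside.units_trivial z (par_le hz) h2

include hcar in
theorem L7 {e : ℕ} {d w : G} (hd : d ∈ parM S.M S.δ1) (hw : w ∈ parM S.M S.δ1) :
    leR S.M d (S.theta ^ e * w) ↔ leR S.M d w := by
  constructor
  · intro h
    set j := joinR S.garside hcar d w with hjdef
    have hjM₁ : j ∈ parM S.M S.δ1 :=
      P1 S.garside hcar (Scomm S hcar) S.par1 hd hw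
    have hwj : leR S.M w j := le_joinR_right S.garside hcar d w
    have hzM₁ : j * w⁻¹ ∈ parM S.M S.δ1 :=
      (P0' S.garside hcar (Scomm S hcar) S.par1 (par_le hw) hjM₁ hwj).2
    have hjle : leR S.M j (S.theta ^ e * w) :=
      joinR_le S.garside hcar h (leR_mul_left (theta_pow_mem S hcar e) w)
    have hzθ : leR S.M (j * w⁻¹) (S.theta ^ e) := by
      show S.theta ^ e * (j * w⁻¹)⁻¹ ∈ S.M
      have e1 : S.theta ^ e * (j * w⁻¹)⁻¹ = (S.theta ^ e * w) * j⁻¹ := by group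
      rw [e1]; exact hjle
    have hz1 : j * w⁻¹ = 1 := L8 S hcar hzM₁ hzθ
    have hjw : j = w := by
      have := mul_inv_eq_one.mp hz1; exact this
    have := le_joinR_left S.garside hcar d w
    rwa [← hjdef, hjw] at this
  · intro h
    show S.theta ^ e * w * d⁻¹ ∈ S.M
    rw [mul_assoc]
    exact Submonoid.mul_mem _ (theta_pow_mem S hcar e) h

include hcar in
theorem NoDeltaM1 {w : G} (hw : w ∈ parM S.M S.δ1) : ¬ leR S.M S.Δ w := by
  intro h
  apply S.M1_ne
  have hΔ : S.Δ ∈ parM S.M S.δ1 :=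
    (P0' S.garside hcar (Scomm S hcar) S.par1 S.garside.delta_mem hw h).1
  apply le_antisymm par_le
  have hle : Submonoid.closure (DivR S.M S.Δ) ≤ parM S.M S.δ1 :=
    Submonoid.closure_le.mpr fun s hs =>
      (P0' S.garside hcar (Scomm S hcar) S.par1 hs.1 hΔ hs.2).1
  rw [S.garside.div_gen_monoid] at hle
  exact hle

include hcar in
theorem L6 : ∀ e : ℕ, ∀ w ∈ parM S.M S.δ1, ∃ f s : ℕ, f + s = e ∧
    ∃ w' ∈ parM S.M S.δ1, S.theta ^ e * w = (S.theta ^ f * w') * S.Δ ^ s ∧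
      Unmovable S.M S.Δ (S.theta ^ f * w') := by
  intro e
  induction e with
  | zero =>
    intro w hw
    exact ⟨0, 0, rfl, w, hw, by simp, by
      constructor
      · simpa using par_le hw
      · simpa using NoDeltaM1 S hcar hw⟩
  | succ e ih =>
    intro w hw
    by_cases hmov : leR S.M S.Δ (S.theta ^ (e + 1) * w)
    · -- movable case
      set wc := S.δ1⁻¹ * w * S.δ1 with hwc
      have hwcM₁ : wc ∈ parM S.M S.δ1 := conj_P_right S.par1 hw
      have key : S.theta ^ (e + 1) * w * S.Δ⁻¹ = S.theta ^ e * wc * S.δ1⁻¹ := by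
        have h2 : S.theta * S.Δ⁻¹ = S.δ1⁻¹ := by
          rw [theta_eq]
          have h4 := (Scomm S hcar S.δ1⁻¹).eq
          rw [h4]; group
        have h3 := ((Scomm S hcar w).inv_left).eq
        calc S.theta ^ (e + 1) * w * S.Δ⁻¹
            = S.theta ^ e * S.theta * (w * S.Δ⁻¹) := by rw [pow_succ]; group
          _ = S.theta ^ e * S.theta * (S.Δ⁻¹ * w) := by rw [← h3]
          _ = S.theta ^ e * ((S.theta * S.Δ⁻¹) * w) := by group
          _ = S.theta ^ e * (S.δ1⁻¹ * w) := by rw [h2]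
          _ = S.theta ^ e * wc * S.δ1⁻¹ := by rw [hwc]; group
      have hδ1le : leR S.M S.δ1 (S.theta ^ e * wc) := by
        show S.theta ^ e * wc * S.δ1⁻¹ ∈ S.M
        rw [← key]; exact hmov
      have hδ1wc : leR S.M S.δ1 wc :=
        (L7 S hcar (delta_mem_P S.par1) hwcM₁).mp hδ1le
      have hw₁M₁ : wc * S.δ1⁻¹ ∈ parM S.M S.δ1 :=
        (P0' S.garside hcar (Scomm S hcar) S.par1 S.par1.mem hwcM₁ hδ1wc).2
      obtain ⟨f, s, hfs, w', hw', heq, hunm⟩ := ih (wc * S.δ1⁻¹) hw₁M₁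
      refine ⟨f, s + 1, by omega, w', hw', ?_, hunm⟩
      have e1 : S.theta ^ (e + 1) * w = (S.theta ^ e * (wc * S.δ1⁻¹)) * S.Δ := by
        rw [← mul_assoc, ← key]; group
      rw [e1, heq, pow_succ, ← mul_assoc]
    · refine ⟨e + 1, 0, by omega, w, hw, by simp, ?_, ?_⟩
      · exact Submonoid.mul_mem _ (theta_pow_mem S hcar (e + 1)) (par_le hw)
      · exact hmov

include hcar in
theorem pullz (t : ℤ) (w : G) : S.Δ ^ t * w = w * S.Δ ^ t := ((Scomm S hcar w).zpow_left t).eq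

include hcar in
theorem commute_theta_delta1 : Commute S.theta S.δ1 := theta_delta1_comm S hcar

include hcar in
theorem theta_delta1_zpow (j : ℤ) : S.theta ^ j * S.δ1 ^ j = S.Δ ^ j := by
  rw [delta_eq_theta_delta1 S hcar]
  exact (Commute.mul_zpow (commute_theta_delta1 S hcar) j).symm

include hcar in
theorem G1_step1 {h : G} (hh : h ∈ S.G₁) :
    ∃ u ∈ parM S.M S.δ1, ∃ r : ℤ, h = u * S.δ1 ^ r := by
  have hh' : h ∈ Subgroup.closure (DivR S.M S.δ1) := hh
  clear hh
  induction hh' using Subgroup.closure_induction with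
  | mem s hs => exact ⟨s, div_subset_P hs, 0, by simp⟩
  | one => exact ⟨1, Submonoid.one_mem _, 0, by simp⟩
  | mul x y hx hy ihx ihy =>
    obtain ⟨u, hu, r, rfl⟩ := ihx
    obtain ⟨v, hv, t, rfl⟩ := ihy
    refine ⟨u * (S.δ1 ^ r * v * (S.δ1 ^ r)⁻¹),
      Submonoid.mul_mem _ hu (conj_M1_zpow S r hv), r + t, ?_⟩
    rw [zpow_add]; group
  | inv x hx ihx =>
    obtain ⟨u, hu, r, rfl⟩ := ihx
    obtain ⟨p, hup, hzP⟩ := D1 S.par1 hu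
    refine ⟨S.δ1 ^ (-r - (p:ℤ)) * (S.δ1 ^ (p:ℕ) * u⁻¹) * (S.δ1 ^ (-r - (p:ℤ)))⁻¹,
      conj_M1_zpow S _ hzP, -r - (p:ℤ), ?_⟩
    rw [← zpow_natCast S.δ1 p]
    group

include hcar in
theorem G1_form {h : G} (hh : h ∈ S.G₁) (j0 : ℕ) :
    ∃ j : ℕ, j0 ≤ j ∧ ∃ u ∈ parM S.M S.δ1, h = S.theta ^ j * u * (S.Δ ^ j)⁻¹ := by
  obtain ⟨u, hu, r, rfl⟩ := G1_step1 S hcar hh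
  set j := j0 + r.natAbs with hjdef
  have hjr : 0 ≤ (j : ℤ) + r := by
    simp only [hjdef]
    omega
  refine ⟨j, by omega, (S.δ1 ^ (j:ℤ) * u * (S.δ1 ^ (j:ℤ))⁻¹) * S.δ1 ^ (((j:ℤ) + r).toNat),
    Submonoid.mul_mem _ (conj_M1_zpow S (j:ℤ) hu)
      (pow_mem (delta_mem_P S.par1) _), ?_⟩
  have hcast : (S.δ1 : G) ^ (((j:ℤ) + r).toNat) = S.δ1 ^ ((j:ℤ) + r) := by
    rw [← zpow_natCast, Int.toNat_of_nonneg hjr]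
  rw [hcast, ← zpow_natCast S.theta j, ← zpow_natCast S.Δ j]
  have hθδ := theta_delta1_zpow S hcar (j : ℤ)
  calc u * S.δ1 ^ r
      = S.Δ ^ (j:ℤ) * (u * S.δ1 ^ r) * (S.Δ ^ (j:ℤ))⁻¹ := by
        rw [pullz S hcar (j:ℤ) (u * S.δ1 ^ r)]; group
    _ = (S.theta ^ (j:ℤ) * S.δ1 ^ (j:ℤ)) * (u * S.δ1 ^ r) * (S.Δ ^ (j:ℤ))⁻¹ := by rw [hθδ]
    _ = S.theta ^ (j:ℤ) * (S.δ1 ^ (j:ℤ) * u * (S.δ1 ^ (j:ℤ))⁻¹ * S.δ1 ^ ((j:ℤ) + r)) *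
          (S.Δ ^ (j:ℤ))⁻¹ := by
        rw [zpow_add]; group

include hcar in
theorem G1_canonical {h : G} (hh : h ∈ S.G₁) :
    ∃ p : ℕ, ∃ w ∈ parM S.M S.δ1, Unmovable S.M S.Δ (S.theta ^ p * w) ∧
      h = (S.theta ^ p * w) * (S.Δ ^ p)⁻¹ := by
  obtain ⟨j, -, u, hu, rfl⟩ := G1_form S hcar hh 0
  obtain ⟨f, s, hfs, w', hw', heq, hunm⟩ := L6 S hcar j u hu
  refine ⟨f, w', hw', hunm, ?_⟩
  have e : S.Δ ^ s * (S.Δ ^ j)⁻¹ = (S.Δ ^ f)⁻¹ := by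
    rw [← hfs, pow_add]; group
  calc S.theta ^ j * u * (S.Δ ^ j)⁻¹
      = (S.theta ^ j * u) * (S.Δ ^ j)⁻¹ := by group
    _ = (S.theta ^ f * w' * S.Δ ^ s) * (S.Δ ^ j)⁻¹ := by rw [heq]
    _ = (S.theta ^ f * w') * (S.Δ ^ s * (S.Δ ^ j)⁻¹) := by group
    _ = (S.theta ^ f * w') * (S.Δ ^ f)⁻¹ := by rw [e]

include hcar in
theorem L5 {x : G} (hx : Unmovable S.M S.Δ x) {a b : ℤ} {h : G} (hh : h ∈ S.G₁)
    (he : x = S.theta ^ a * h * S.Δ ^ b) :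
    ∃ p : ℕ, ∃ w ∈ parM S.M S.δ1, x = S.theta ^ p * w := by
  obtain ⟨j, hj, u, hu, hform⟩ := G1_form S hcar hh (a.natAbs + b.natAbs)
  have hja : 0 ≤ (j:ℤ) + a := by
    have h1 : a.natAbs ≤ j := by omega
    omega
  have hjb : 0 ≤ (j:ℤ) - b := by
    have h1 : b.natAbs ≤ j := by omega
    omega
  set E := ((j:ℤ) + a).toNat with hE
  set U := ((j:ℤ) - b).toNat with hU
  have hEe : (E : ℤ) = (j:ℤ) + a := Int.toNat_of_nonneg hja
  have hUe : (U : ℤ) = (j:ℤ) - b := Int.toNat_of_nonneg hjb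
  have claim : x * S.Δ ^ U = S.theta ^ E * u := by
    rw [he, hform]
    rw [← zpow_natCast S.theta E, ← zpow_natCast S.Δ U, ← zpow_natCast S.theta j,
      ← zpow_natCast S.Δ j, hEe, hUe]
    group
  obtain ⟨f, s, hfs, w', hw', heq, hunm⟩ := L6 S hcar E u hu
  have heq2 : (S.theta ^ f * w') * S.Δ ^ ((s:ℤ) - (U:ℤ)) = x := by
    have e1 : x * S.Δ ^ (U:ℕ) = (S.theta ^ f * w') * S.Δ ^ s := by rw [claim, heq]
    rw [← zpow_natCast S.Δ s, ← zpow_natCast S.Δ U] at e1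
    calc (S.theta ^ f * w') * S.Δ ^ ((s:ℤ) - (U:ℤ))
        = ((S.theta ^ f * w') * S.Δ ^ (s:ℤ)) * (S.Δ ^ (U:ℤ))⁻¹ := by
          rw [zpow_sub]; group
      _ = (x * S.Δ ^ (U:ℤ)) * (S.Δ ^ (U:ℤ))⁻¹ := by rw [← e1]
      _ = x := by group
  obtain ⟨hxeq, -⟩ := unmovable_unique S.garside hunm hx heq2
  exact ⟨f, w', hw', hxeq.symm⟩

end SettingLemmas

section TailLemmas

variable {car : Subgroup G} {M : Submonoid G} {Δ : G} (g : IsGarsideOn car M Δ)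

include g in
theorem tail_eq {N' : Submonoid G} {a b : G} (hb : b ∈ N')
    (hset : {c : G | c ∈ N' ∧ leR M c a} = {c : G | c ∈ N' ∧ leR M c b}) :
    tail M N' a = b := by
  have hex : ∃ b' : G, b' ∈ N' ∧
      {c : G | c ∈ N' ∧ leR M c a} = {c : G | c ∈ N' ∧ leR M c b'} := ⟨b, hb, hset⟩
  rw [tail, dif_pos hex]
  obtain ⟨hb', hset'⟩ := hex.choose_spec
  have hiff := Set.ext_iff.mp hset
  have hiff' := Set.ext_iff.mp hset'
  have h1 : hex.choose ∈ {c : G | c ∈ N' ∧ leR M c hex.choose} := ⟨hb', leR_refl _⟩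
  have h1b := (hiff hex.choose).mp ((hiff' hex.choose).mpr h1)
  have h2 : b ∈ {c : G | c ∈ N' ∧ leR M c b} := ⟨hb, leR_refl b⟩
  have h2b := (hiff' b).mp ((hiff b).mpr h2)
  exact leR_antisymm g h1b.2 h2b.2

include g in
theorem tail_self {N' : Submonoid G} {a : G} (ha : a ∈ N') : tail M N' a = a :=
  tail_eq g ha rfl

theorem strip_one (M₁ N : Submonoid G) (a : G) :
    strip M M₁ N 1 a = a * (tail M M₁ a)⁻¹ := by
  simp [strip]

theorem strip_two (M₁ N : Submonoid G) (a : G) :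
    strip M M₁ N 2 a = strip M M₁ N 1 a * (tail M N (strip M M₁ N 1 a))⁻¹ := by
  simp [strip]

theorem strip_congr {M₁ N : Submonoid G} {a a' : G}
    (h : strip M M₁ N 1 a = strip M M₁ N 1 a') :
    ∀ p : ℕ, 1 ≤ p → strip M M₁ N p a = strip M M₁ N p a' := by
  intro p hp
  induction p with
  | zero => omega
  | succ p ih =>
    rcases Nat.eq_zero_or_pos p with rfl | hp'
    · exact h
    · show strip M M₁ N p a * _ = strip M M₁ N p a' * _
      rw [ih hp']

theorem bh_congr {M₁ N : Submonoid G} {a a' : G}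
    (h : strip M M₁ N 1 a = strip M M₁ N 1 a') :
    bh M M₁ N a = bh M M₁ N a' := by
  unfold bh
  congr 1
  ext p
  constructor
  · rintro ⟨h1, h2⟩
    exact ⟨h1, by rw [← strip_congr h p h1]; exact h2⟩
  · rintro ⟨h1, h2⟩
    exact ⟨h1, by rw [strip_congr h p h1]; exact h2⟩

include g in
theorem bh_eq_one_of_strip_one {M₁ N : Submonoid G} {a : G}
    (h : strip M M₁ N 1 a = 1) : bh M M₁ N a = 1 := by
  unfold bh
  apply le_antisymm
  · exact Nat.sInf_le ⟨le_rfl, h⟩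
  · have hne : {p : ℕ | 1 ≤ p ∧ strip M M₁ N p a = 1}.Nonempty := ⟨1, le_rfl, h⟩
    exact (Nat.sInf_mem hne).1

include g in
theorem dpt_of_strip_one {M₁ N : Submonoid G} {a : G}
    (h : strip M M₁ N 1 a = 1) : dpt M M₁ N a = 0 := by
  unfold dpt
  rw [bh_eq_one_of_strip_one g h]

end TailLemmas

section DptTheta

variable (S : Setting G) (hcar : S.car = ⊤)

include hcar in
theorem tail_M1_theta {e : ℕ} {w : G} (hw : w ∈ parM S.M S.δ1) :
    tail S.M (parM S.M S.δ1) (S.theta ^ e * w) = w := by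
  apply tail_eq S.garside hw
  ext c
  constructor
  · rintro ⟨h1, h2⟩
    exact ⟨h1, (L7 S hcar h1 hw).mp h2⟩
  · rintro ⟨h1, h2⟩
    exact ⟨h1, (L7 S hcar h1 hw).mpr h2⟩

include hcar in
theorem strip_one_theta {e : ℕ} {w : G} (hw : w ∈ parM S.M S.δ1) :
    strip S.M S.M₁ S.Nsub 1 (S.theta ^ e * w) = S.theta ^ e := by
  rw [strip_one]
  have h : tail S.M S.M₁ (S.theta ^ e * w) = w := tail_M1_theta S hcar hw
  rw [h]
  group

include hcar in
theorem dpt_M1 {w : G} (hw : w ∈ parM S.M S.δ1) : dpt S.M S.M₁ S.Nsub w = 0 := by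
  apply dpt_of_strip_one S.garside
  rw [strip_one, tail_self S.garside (show w ∈ S.M₁ from hw)]
  group

include hcar in
theorem dpt_one : dpt S.M S.M₁ S.Nsub (1 : G) = 0 :=
  dpt_M1 S hcar (Submonoid.one_mem _)

include hcar in
theorem dpt_theta_eq {e : ℕ} {w : G} (hw : w ∈ parM S.M S.δ1) :
    dpt S.M S.M₁ S.Nsub (S.theta ^ e * w) = dpt S.M S.M₁ S.Nsub (S.Δ ^ e) := by
  unfold dpt
  have h1 : strip S.M S.M₁ S.Nsub 1 (S.theta ^ e * w) = S.theta ^ e :=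
    strip_one_theta S hcar hw
  have h2 : strip S.M S.M₁ S.Nsub 1 (S.Δ ^ e) = S.theta ^ e := by
    have he : S.Δ ^ e = S.theta ^ e * S.δ1 ^ e := deltaPow_eq S hcar e
    rw [he]
    exact strip_one_theta S hcar (pow_mem (delta_mem_P S.par1) e)
  rw [bh_congr (h1.trans h2.symm)]

end DptTheta

section Finiteness

variable {car : Subgroup G} {M : Submonoid G} {Δ : G} (g : IsGarsideOn car M Δ)
  (hcar : car = ⊤) (hcomm : ∀ x : G, Commute Δ x) {δ : G} (hp : IsParabolic M Δ δ)

include g in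
theorem divSet_finite : ∀ n : ℕ, ∀ a ∈ M, len M a ≤ n →
    {c : G | c ∈ M ∧ leR M c a}.Finite := by
  intro n
  induction n with
  | zero =>
    intro a ha hlen
    have ha1 : a = 1 := by
      by_contra hne; have := one_le_len g ha hne; omega
    subst ha1
    apply Set.Finite.subset (Set.finite_singleton 1)
    rintro c ⟨hc, hle⟩
    have h2 : c⁻¹ ∈ M := by simpa [leR] using hle
    simp [g.units_trivial c hc h2]
  | succ n ih =>
    intro a ha hlen
    by_cases ha1 : a = 1
    · subst ha1
      apply Set.Finite.subset (Set.finite_singleton 1)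
      rintro c ⟨hc, hle⟩
      have h2 : c⁻¹ ∈ M := by simpa [leR] using hle
      simp [g.units_trivial c hc h2]
    · have hS₀ : {s : G | s ∈ DivR M Δ ∧ s ≠ 1 ∧ leR M s a}.Finite :=
        g.div_finite.subset (fun s hs => hs.1)
      have hbig : ({1} ∪ ⋃ s ∈ {s : G | s ∈ DivR M Δ ∧ s ≠ 1 ∧ leR M s a},
          (fun c => c * s) '' {c : G | c ∈ M ∧ leR M c (a * s⁻¹)}).Finite := by
        apply Set.Finite.union (Set.finite_singleton 1)
        apply Set.Finite.biUnion hS₀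
        intro s hs
        apply Set.Finite.image
        have hsM : a * s⁻¹ ∈ M := hs.2.2
        have hlt : len M (a * s⁻¹) < len M a := len_lt' g ha hs.1.1 hs.2.1 hs.2.2
        exact ih (a * s⁻¹) hsM (by omega)
      apply Set.Finite.subset hbig
      rintro c ⟨hc, hle⟩
      by_cases hc1 : c = 1
      · exact Or.inl (by simp [hc1])
      · obtain ⟨s, hs, hsne, hsc⟩ := exists_simple_div g hc hc1
        refine Or.inr ?_
        apply Set.mem_biUnion (show s ∈ {s : G | s ∈ DivR M Δ ∧ s ≠ 1 ∧ leR M s a} from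
          ⟨hs, hsne, leR_trans hsc hle⟩)
        refine ⟨c * s⁻¹, ⟨hsc, leR_mul_right s⁻¹ hle⟩, by group⟩

include g hcar hcomm hp in
theorem finset_join (F : Finset G) {a : G} (ha : a ∈ M)
    (hF : ∀ c ∈ F, c ∈ parM M δ ∧ leR M c a) :
    ∃ b, b ∈ parM M δ ∧ leR M b a ∧ ∀ c ∈ F, leR M c b := by
  classical
  induction F using Finset.induction_on with
  | empty => exact ⟨1, Submonoid.one_mem _, by simpa [leR] using ha, by simp⟩
  | @insert x F hx ih =>
    obtain ⟨b, hbP, hba, hball⟩ := ih (fun c hc => hF c (Finset.mem_insert_of_mem hc))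
    have hxP := hF x (Finset.mem_insert_self x F)
    refine ⟨joinR g hcar x b, P1 g hcar hcomm hp hxP.1 hbP,
      joinR_le g hcar hxP.2 hba, ?_⟩
    intro c hc
    rcases Finset.mem_insert.mp hc with rfl | hc
    · exact le_joinR_left g hcar c b
    · exact leR_trans (hball c hc) (le_joinR_right g hcar x b)

include g hcar hcomm hp in
theorem tail_par_spec {a : G} (ha : a ∈ M) :
    tail M (parM M δ) a ∈ parM M δ ∧ leR M (tail M (parM M δ) a) a ∧
      ∀ c ∈ parM M δ, leR M c a → leR M c (tail M (parM M δ) a) := by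
  have hD : {c : G | c ∈ parM M δ ∧ leR M c a}.Finite :=
    (divSet_finite g (len M a) a ha le_rfl).subset (fun c hc => ⟨par_le hc.1, hc.2⟩)
  obtain ⟨b, hbP, hba, hball⟩ := finset_join g hcar hcomm hp hD.toFinset ha
    (fun c hc => (Set.Finite.mem_toFinset hD).mp hc)
  have hmax : ∀ c ∈ parM M δ, leR M c a → leR M c b := fun c h1 h2 =>
    hball c ((Set.Finite.mem_toFinset hD).mpr ⟨h1, h2⟩)
  have htail : tail M (parM M δ) a = b := by
    apply tail_eq g hbP
    ext c
    constructor
    · rintro ⟨h1, h2⟩; exact ⟨h1, hmax c h1 h2⟩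
    · rintro ⟨h1, h2⟩; exact ⟨h1, leR_trans h2 hba⟩
  rw [htail]
  exact ⟨hbP, hba, hmax⟩

end Finiteness

section Term

variable (S : Setting G) (hcar : S.car = ⊤)

theorem exists_div_union {a : G} (ha : a ∈ S.M) (hne : a ≠ 1) :
    ∃ d : G, d ≠ 1 ∧ (d ∈ parM S.M S.lam ∨ d ∈ parM S.M S.δ1) ∧ leR S.M d a := by
  rw [← S.unionGen] at ha
  have key : ∀ x : G,
      x ∈ Submonoid.closure ((parM S.M S.lam : Set G) ∪ (parM S.M S.δ1 : Set G)) →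
      (x = 1 ∨ ∃ d : G, d ≠ 1 ∧ (d ∈ parM S.M S.lam ∨ d ∈ parM S.M S.δ1) ∧ leR S.M d x) := by
    intro x hx
    induction hx using Submonoid.closure_induction with
    | mem s hs =>
      by_cases h : s = 1
      · exact Or.inl h
      · refine Or.inr ⟨s, h, ?_, leR_refl s⟩
        rcases hs with h1 | h1
        · exact Or.inl h1
        · exact Or.inr h1
    | one => exact Or.inl rfl
    | mul x y hx hy ihx ihy =>
      rcases ihy with rfl | ⟨d, hdne, hdor, hdle⟩
      · rw [mul_one]; exact ihx
      · refine Or.inr ⟨d, hdne, hdor, leR_trans hdle (leR_mul_left ?_ y)⟩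
        rw [← S.unionGen]; exact hx
  rcases key a ha with h | h
  · exact absurd h hne
  · exact h

theorem strip_shift (M M₁ N : Submonoid G) (a : G) :
    ∀ q : ℕ, strip M M₁ N (q + 2) a = strip M M₁ N q (strip M M₁ N 2 a) := by
  intro q
  induction q with
  | zero => rfl
  | succ q ih =>
    show strip M M₁ N (q + 2) a *
      (tail M (if (q + 2) % 2 = 0 then M₁ else N) (strip M M₁ N (q + 2) a))⁻¹ = _
    rw [ih, Nat.add_mod_right]
    rfl

include hcar in
theorem TERM : ∀ n : ℕ, ∀ a ∈ S.M, len S.M a ≤ n →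
    ∃ p : ℕ, 1 ≤ p ∧ strip S.M S.M₁ S.Nsub p a = 1 := by
  intro n
  induction n using Nat.strong_induction_on with
  | _ n ih =>
  intro a ha hlen
  by_cases ha1 : a = 1
  · subst ha1
    refine ⟨1, le_rfl, ?_⟩
    rw [strip_one, tail_self S.garside (Submonoid.one_mem S.M₁)]
    group
  obtain ⟨ht1P, ht1le, ht1max⟩ := tail_par_spec S.garside hcar (Scomm S hcar) S.par1 ha
  set t₁ := tail S.M (parM S.M S.δ1) a with ht₁def
  have ha' : a * t₁⁻¹ ∈ S.M := ht1le
  have hstrip1 : strip S.M S.M₁ S.Nsub 1 a = a * t₁⁻¹ := by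
    rw [strip_one]; rfl
  obtain ⟨ht2P, ht2le, ht2max⟩ :=
    tail_par_spec S.garside hcar (Scomm S hcar) S.parH ha'
  set t₂ := tail S.M (parM S.M S.lam) (a * t₁⁻¹) with ht₂def
  have hstrip2 : strip S.M S.M₁ S.Nsub 2 a = (a * t₁⁻¹) * t₂⁻¹ := by
    rw [strip_two, hstrip1]; rfl
  have ha'' : (a * t₁⁻¹) * t₂⁻¹ ∈ S.M := ht2le
  have hkey : len S.M ((a * t₁⁻¹) * t₂⁻¹) < len S.M a := by
    obtain ⟨d, hdne, hdor, hdle⟩ := exists_div_union S ha ha1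
    have hstep2 : len S.M ((a * t₁⁻¹) * t₂⁻¹) ≤ len S.M (a * t₁⁻¹) := by
      by_cases h2 : t₂ = 1
      · rw [h2]; simp
      · exact le_of_lt (len_lt' S.garside ha' (par_le ht2P) h2 ht2le)
    have case1 : t₁ ≠ 1 → len S.M ((a * t₁⁻¹) * t₂⁻¹) < len S.M a := by
      intro h1
      have := len_lt' S.garside ha (par_le ht1P) h1 ht1le
      omega
    rcases hdor with hdN | hdM₁
    · by_cases h1 : t₁ = 1
      · have ha'eq : a * t₁⁻¹ = a := by rw [h1]; group
        have ht₂ne : t₂ ≠ 1 := by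
          intro h2
          have h3 := ht2max d hdN (by rw [ha'eq]; exact hdle)
          rw [h2] at h3
          have h4 : d⁻¹ ∈ S.M := by simpa [leR] using h3
          exact hdne (S.garside.units_trivial d (par_le hdN) h4)
        have := len_lt' S.garside ha' (par_le ht2P) ht₂ne ht2le
        rw [ha'eq] at this ⊢
        exact this
      · exact case1 h1
    · have ht₁ne : t₁ ≠ 1 := by
        intro h1
        have h3 := ht1max d hdM₁ hdle
        rw [h1] at h3
        have h4 : d⁻¹ ∈ S.M := by simpa [leR] using h3
        exact hdne (S.garside.units_trivial d (par_le hdM₁) h4)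
      exact case1 ht₁ne
  obtain ⟨q, hq1, hq⟩ := ih (len S.M ((a * t₁⁻¹) * t₂⁻¹)) (by omega)
    ((a * t₁⁻¹) * t₂⁻¹) ha'' le_rfl
  refine ⟨q + 2, by omega, ?_⟩
  rw [strip_shift, hstrip2]
  exact hq

include hcar in
theorem mem_M1_of_dpt_zero {x : G} (hx : x ∈ S.M) (h : dpt S.M S.M₁ S.Nsub x = 0) :
    x ∈ parM S.M S.δ1 := by
  obtain ⟨p, hp1, hp⟩ := TERM S hcar (len S.M x) x hx le_rfl
  have hne : {p : ℕ | 1 ≤ p ∧ strip S.M S.M₁ S.Nsub p x = 1}.Nonempty := ⟨p, hp1, hp⟩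
  have hmem := Nat.sInf_mem hne
  have h1 : 1 ≤ bh S.M S.M₁ S.Nsub x := hmem.1
  have hbh1 : bh S.M S.M₁ S.Nsub x = 1 := by
    unfold dpt at h
    omega
  have h2 : strip S.M S.M₁ S.Nsub (bh S.M S.M₁ S.Nsub x) x = 1 := hmem.2
  rw [hbh1, strip_one] at h2
  have h3 : x = tail S.M S.M₁ x := mul_inv_eq_one.mp h2
  rw [h3]
  exact (tail_par_spec S.garside hcar (Scomm S hcar) S.par1 hx).1

end Term

section MainHelpers

variable (S : Setting G) (hcar : S.car = ⊤)

theorem parM_le_parG {δ : G} {x : G} (hx : x ∈ parM S.M δ) : x ∈ parG S.M δ := by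
  induction hx using Submonoid.closure_induction with
  | mem s hs => exact Subgroup.subset_closure hs
  | one => exact Subgroup.one_mem _
  | mul x y hx hy ihx ihy => exact Subgroup.mul_mem _ ihx ihy

theorem delta1_mem_G1 : S.δ1 ∈ S.G₁ := Subgroup.subset_closure (delta_mem_div S.par1)

include hcar in
theorem pullzi (z : ℤ) (w : G) : (S.Δ ^ z)⁻¹ * w = w * (S.Δ ^ z)⁻¹ :=
  (((Scomm S hcar w).zpow_left z).inv_left).eq

include hcar in
theorem theta_zpow_eq (z : ℤ) : S.theta ^ z = S.Δ ^ z * (S.δ1 ^ z)⁻¹ := by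
  have h1 := theta_delta1_zpow S hcar z
  rw [← h1]; group

include hcar in
theorem conjθ (z : ℤ) (x : G) :
    S.theta ^ z * (S.δ1 ^ z * x * (S.δ1 ^ z)⁻¹) = x * S.theta ^ z := by
  have h1 := theta_delta1_zpow S hcar z
  have h2 := pullz S hcar z x
  have h3 : S.theta ^ z = S.Δ ^ z * (S.δ1 ^ z)⁻¹ := theta_zpow_eq S hcar z
  calc S.theta ^ z * (S.δ1 ^ z * x * (S.δ1 ^ z)⁻¹)
      = (S.theta ^ z * S.δ1 ^ z) * x * (S.δ1 ^ z)⁻¹ := by group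
    _ = S.Δ ^ z * x * (S.δ1 ^ z)⁻¹ := by rw [h1]
    _ = (x * S.Δ ^ z) * (S.δ1 ^ z)⁻¹ := by rw [h2]
    _ = x * (S.Δ ^ z * (S.δ1 ^ z)⁻¹) := by group
    _ = x * S.theta ^ z := by rw [← h3]

theorem thetaBar_form {x : G} (hx : x ∈ thetaBar S.M₁ S.theta) :
    ∃ e : ℕ, ∃ w ∈ parM S.M S.δ1, x = S.theta ^ e * w := by
  rcases hx with ⟨e, he, w, hw, rfl⟩ | hx
  · exact ⟨e, w, hw, rfl⟩
  · exact ⟨0, x, hx, by simp⟩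

theorem form_thetaBar {e : ℕ} {w : G} (hw : w ∈ parM S.M S.δ1) :
    S.theta ^ e * w ∈ thetaBar S.M₁ S.theta := by
  rcases Nat.eq_zero_or_pos e with rfl | he
  · right; rw [pow_zero, one_mul]; exact hw
  · left; exact ⟨e, he, w, hw, rfl⟩

include hcar in
theorem dpt_theta_val {ζ : ℕ} (hA : S.condA ζ) {e : ℕ} {w : G}
    (hw : w ∈ parM S.M S.δ1) :
    dpt S.M S.M₁ S.Nsub (S.theta ^ e * w) = if e = 0 then 0 else ζ * e + 1 := by
  rw [dpt_theta_eq S hcar hw]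
  rcases Nat.eq_zero_or_pos e with rfl | he
  · simp only [pow_zero, if_pos rfl]
    exact dpt_one S hcar
  · rw [if_neg (by omega)]
    exact hA e he

include hcar in
theorem theta_pow_M1_in_G1form {j : ℕ} (b₀ : G) :
    S.theta ^ j * b₀ * (S.Δ ^ j)⁻¹ = (S.δ1 ^ j)⁻¹ * b₀ := by
  have h1 : S.theta ^ (j:ℤ) = S.Δ ^ (j:ℤ) * (S.δ1 ^ (j:ℤ))⁻¹ := theta_zpow_eq S hcar (j:ℤ)
  rw [← zpow_natCast S.theta j, ← zpow_natCast S.Δ j, ← zpow_natCast S.δ1 j]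
  calc S.theta ^ (j:ℤ) * b₀ * (S.Δ ^ (j:ℤ))⁻¹
      = S.theta ^ (j:ℤ) * (b₀ * (S.Δ ^ (j:ℤ))⁻¹) := by group
    _ = S.theta ^ (j:ℤ) * ((S.Δ ^ (j:ℤ))⁻¹ * b₀) := by rw [pullzi S hcar (j:ℤ) b₀]
    _ = (S.theta ^ (j:ℤ) * (S.Δ ^ (j:ℤ))⁻¹) * b₀ := by group
    _ = (S.δ1 ^ (j:ℤ))⁻¹ * b₀ := by
        rw [h1, pullz S hcar (j:ℤ) ((S.δ1 ^ (j:ℤ))⁻¹)]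
        group

end MainHelpers

end GarsideOrder

open GarsideOrder in
/-- Assuming Conditions A and B with constant `ζ ≥ 1`, `G₁ P⁻¹ G₁ ⊆ P⁻¹`: for all
`α, γ ∈ G₁` and every `(H, G₁)`-negative `β`, the element `α β γ` is `(H, G₁)`-negative. -/
theorem statement6 {G : Type*} [Group G] (S : Setting G) (hcar : S.car = ⊤)
    (ζ : ℕ) (hζ : 1 ≤ ζ) (hA : S.condA ζ) (hB : S.condB ζ) :
    ∀ α ∈ S.G₁, ∀ γ ∈ S.G₁, ∀ β ∈ S.Neg, α * β * γ ∈ S.Neg := by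
  intro α hα γ hγ β hβ
  obtain ⟨b, k, hbu, hk1, hβeq, hdptb⟩ := hβ
  have hζz : (1:ℤ) ≤ (ζ:ℤ) := by exact_mod_cast hζ
  have hdptΔk : dpt S.M S.M₁ S.Nsub (S.Δ ^ k) = ζ * k + 1 := hA k hk1
  have hdptb' : dpt S.M S.M₁ S.Nsub b ≤ ζ * k := by
    rw [hdptΔk] at hdptb
    exact Nat.lt_succ_iff.mp hdptb
  by_cases hbθ : b ∈ thetaBar S.M₁ S.theta
  · -- CASE II : b ∈ Θ̄
    obtain ⟨j, b₀, hb₀, hbeq⟩ := thetaBar_form S hbθ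
    have hjk : j < k := by
      rcases Nat.eq_zero_or_pos j with rfl | hj
      · omega
      · have hv : dpt S.M S.M₁ S.Nsub b = ζ * j + 1 := by
          rw [hbeq, dpt_theta_val S hcar hA hb₀, if_neg (by omega)]
        have h2 : ζ * j < ζ * k := by
          rw [hv] at hdptb'
          linarith
        exact lt_of_mul_lt_mul_left h2 (Nat.zero_le ζ)
    have hhG : α * ((S.δ1 ^ j)⁻¹ * b₀) * γ ∈ S.G₁ := by
      refine Subgroup.mul_mem _ (Subgroup.mul_mem _ hα ?_) hγ
      exact Subgroup.mul_mem _ (Subgroup.inv_mem _ (Subgroup.pow_mem _ (delta1_mem_G1 S) j))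
        (parM_le_parG S hb₀)
    obtain ⟨p, w, hw, hHu, hheq⟩ := G1_canonical S hcar hhG
    refine ⟨S.theta ^ p * w, p + (k - j), hHu, by omega, ?_, ?_⟩
    · have hsplit : β = ((S.δ1 ^ j)⁻¹ * b₀) * (S.Δ ^ (k - j))⁻¹ := by
        rw [hβeq, hbeq]
        have h1 : S.theta ^ j * b₀ = ((S.δ1 ^ j)⁻¹ * b₀) * S.Δ ^ j := by
          rw [← theta_pow_M1_in_G1form S hcar b₀]; group
        rw [h1]
        have h2 : S.Δ ^ j * (S.Δ ^ k)⁻¹ = (S.Δ ^ (k - j))⁻¹ := by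
          rw [← zpow_natCast S.Δ j, ← zpow_natCast S.Δ k, ← zpow_natCast S.Δ (k - j),
            show ((k - j : ℕ) : ℤ) = (k : ℤ) - (j : ℤ) from by omega]
          group
        rw [mul_assoc, h2]
      have hcomm2 : (S.Δ ^ (k - j))⁻¹ * γ = γ * (S.Δ ^ (k - j))⁻¹ := by
        rw [← zpow_natCast S.Δ (k - j)]
        exact pullzi S hcar _ γ
      have hprod : α * β * γ = (α * ((S.δ1 ^ j)⁻¹ * b₀) * γ) * (S.Δ ^ (k - j))⁻¹ := by
        rw [hsplit]
        calc α * ((S.δ1 ^ j)⁻¹ * b₀ * (S.Δ ^ (k - j))⁻¹) * γ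
            = α * ((S.δ1 ^ j)⁻¹ * b₀) * ((S.Δ ^ (k - j))⁻¹ * γ) := by group
          _ = α * ((S.δ1 ^ j)⁻¹ * b₀) * (γ * (S.Δ ^ (k - j))⁻¹) := by rw [hcomm2]
          _ = (α * ((S.δ1 ^ j)⁻¹ * b₀) * γ) * (S.Δ ^ (k - j))⁻¹ := by group
      rw [hprod, hheq, pow_add]
      group
    · rw [dpt_theta_val S hcar hA hw, hA (p + (k - j)) (by omega)]
      rcases Nat.eq_zero_or_pos p with rfl | hp
      · rw [if_pos rfl]
        exact Nat.succ_pos _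
      · rw [if_neg (by omega)]
        have h5 : ζ * p < ζ * (p + (k - j)) :=
          mul_lt_mul_of_pos_left (show p < p + (k - j) by omega) (show 0 < ζ by omega)
        exact Nat.add_lt_add_right h5 1
  · -- CASE I : b ∉ Θ̄
    obtain ⟨m, a₀, ha₀, hAu, hαeq⟩ := G1_canonical S hcar hα
    obtain ⟨n, c₀, hc₀, hCu, hγeq⟩ := G1_canonical S hcar hγ
    have hAM : S.theta ^ m * a₀ ∈ S.M := hAu.1
    have hCM : S.theta ^ n * c₀ ∈ S.M := hCu.1
    obtain ⟨c₁, t₁, hc₁u, heq1⟩ :=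
      deltaForm S.garside (delta_ne_one S) (S.M.mul_mem hAM hbu.1)
    have heq1z : (S.theta ^ m * a₀) * b = c₁ * S.Δ ^ ((t₁:ℕ):ℤ) := by
      rw [zpow_natCast]; exact heq1
    obtain ⟨ε₁, hε₁le, hε₁eq, hε₁one⟩ :=
      hB (S.theta ^ m * a₀) b c₁ ((t₁:ℕ):ℤ) hAu hbu (fun hh => hbθ hh.2) hc₁u heq1z
    have hb1 : b = (S.theta ^ m * a₀)⁻¹ * c₁ * S.Δ ^ ((t₁:ℕ):ℤ) := by
      calc b = (S.theta ^ m * a₀)⁻¹ * ((S.theta ^ m * a₀) * b) := by group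
        _ = (S.theta ^ m * a₀)⁻¹ * (c₁ * S.Δ ^ ((t₁:ℕ):ℤ)) := by rw [heq1z]
        _ = (S.theta ^ m * a₀)⁻¹ * c₁ * S.Δ ^ ((t₁:ℕ):ℤ) := by group
    have hc₁θ : c₁ ∉ thetaBar S.M₁ S.theta := by
      intro hmem
      obtain ⟨e, w, hw, hceq⟩ := thetaBar_form S hmem
      have hh'G : (S.δ1 ^ ((e:ℤ) - m) * a₀⁻¹ * (S.δ1 ^ ((e:ℤ) - m))⁻¹) * w ∈ S.G₁ := by
        refine Subgroup.mul_mem _ (Subgroup.mul_mem _ (Subgroup.mul_mem _ ?_ ?_) ?_)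
          (parM_le_parG S hw)
        · exact Subgroup.zpow_mem _ (delta1_mem_G1 S) _
        · exact Subgroup.inv_mem _ (parM_le_parG S ha₀)
        · exact Subgroup.inv_mem _ (Subgroup.zpow_mem _ (delta1_mem_G1 S) _)
      have hconj := conjθ S hcar ((e:ℤ) - (m:ℤ)) a₀⁻¹
      have hsuff : (S.theta ^ m * a₀)⁻¹ * (S.theta ^ e * w) =
          S.theta ^ ((e:ℤ) - (m:ℤ)) *
            ((S.δ1 ^ ((e:ℤ) - m) * a₀⁻¹ * (S.δ1 ^ ((e:ℤ) - m))⁻¹) * w) := by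
        calc (S.theta ^ m * a₀)⁻¹ * (S.theta ^ e * w)
            = (a₀⁻¹ * S.theta ^ ((e:ℤ) - (m:ℤ))) * w := by
              rw [← zpow_natCast S.theta m, ← zpow_natCast S.theta e]; group
          _ = (S.theta ^ ((e:ℤ) - (m:ℤ)) *
                (S.δ1 ^ ((e:ℤ) - m) * a₀⁻¹ * (S.δ1 ^ ((e:ℤ) - m))⁻¹)) * w := by rw [hconj]
          _ = S.theta ^ ((e:ℤ) - (m:ℤ)) *
                ((S.δ1 ^ ((e:ℤ) - m) * a₀⁻¹ * (S.δ1 ^ ((e:ℤ) - m))⁻¹) * w) := by group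
      have hbform : b = S.theta ^ ((e:ℤ) - (m:ℤ)) *
          ((S.δ1 ^ ((e:ℤ) - m) * a₀⁻¹ * (S.δ1 ^ ((e:ℤ) - m))⁻¹) * w) * S.Δ ^ ((t₁:ℕ):ℤ) := by
        rw [hb1, hceq, hsuff]
      obtain ⟨p, w', hw', hbeq⟩ := L5 S hcar hbu hh'G hbform
      exact hbθ (hbeq ▸ form_thetaBar S hw')
    obtain ⟨c₂, t₂, hc₂u, heq2⟩ :=
      deltaForm S.garside (delta_ne_one S) (S.M.mul_mem hc₁u.1 hCM)
    have heq2z : c₁ * (S.theta ^ n * c₀) = c₂ * S.Δ ^ ((t₂:ℕ):ℤ) := by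
      rw [zpow_natCast]; exact heq2
    obtain ⟨ε₂, hε₂le, hε₂eq, hε₂one⟩ :=
      hB c₁ (S.theta ^ n * c₀) c₂ ((t₂:ℕ):ℤ) hc₁u hCu (fun hh => hc₁θ hh.1) hc₂u heq2z
    have hc₂θ : c₂ ∉ thetaBar S.M₁ S.theta := by
      intro hmem
      obtain ⟨e, w, hw, hceq⟩ := thetaBar_form S hmem
      have hCinv : (S.theta ^ n * c₀)⁻¹ = (S.Δ ^ (n:ℕ))⁻¹ * γ⁻¹ := by
        rw [hγeq]; group
      have hh'G : (S.δ1 ^ ((e:ℤ) - m) * a₀⁻¹ * (S.δ1 ^ ((e:ℤ) - m))⁻¹) * (w * γ⁻¹) ∈ S.G₁ := by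
        refine Subgroup.mul_mem _ (Subgroup.mul_mem _ (Subgroup.mul_mem _ ?_ ?_) ?_)
          (Subgroup.mul_mem _ (parM_le_parG S hw) (Subgroup.inv_mem _ hγ))
        · exact Subgroup.zpow_mem _ (delta1_mem_G1 S) _
        · exact Subgroup.inv_mem _ (parM_le_parG S ha₀)
        · exact Subgroup.inv_mem _ (Subgroup.zpow_mem _ (delta1_mem_G1 S) _)
      have hc₁eq : c₁ = c₂ * S.Δ ^ ((t₂:ℕ):ℤ) * (S.theta ^ n * c₀)⁻¹ := by
        calc c₁ = (c₁ * (S.theta ^ n * c₀)) * (S.theta ^ n * c₀)⁻¹ := by group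
          _ = (c₂ * S.Δ ^ ((t₂:ℕ):ℤ)) * (S.theta ^ n * c₀)⁻¹ := by rw [heq2z]
          _ = c₂ * S.Δ ^ ((t₂:ℕ):ℤ) * (S.theta ^ n * c₀)⁻¹ := by group
      have hconj := conjθ S hcar ((e:ℤ) - (m:ℤ)) a₀⁻¹
      have hsuff : (S.theta ^ m * a₀)⁻¹ * (S.theta ^ e * w) =
          S.theta ^ ((e:ℤ) - (m:ℤ)) *
            (S.δ1 ^ ((e:ℤ) - m) * a₀⁻¹ * (S.δ1 ^ ((e:ℤ) - m))⁻¹) * w := by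
        calc (S.theta ^ m * a₀)⁻¹ * (S.theta ^ e * w)
            = (a₀⁻¹ * S.theta ^ ((e:ℤ) - (m:ℤ))) * w := by
              rw [← zpow_natCast S.theta m, ← zpow_natCast S.theta e]; group
          _ = (S.theta ^ ((e:ℤ) - (m:ℤ)) *
                (S.δ1 ^ ((e:ℤ) - m) * a₀⁻¹ * (S.δ1 ^ ((e:ℤ) - m))⁻¹)) * w := by rw [hconj]
          _ = S.theta ^ ((e:ℤ) - (m:ℤ)) *
                (S.δ1 ^ ((e:ℤ) - m) * a₀⁻¹ * (S.δ1 ^ ((e:ℤ) - m))⁻¹) * w := by group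
      have hbform : b = S.theta ^ ((e:ℤ) - (m:ℤ)) *
          ((S.δ1 ^ ((e:ℤ) - m) * a₀⁻¹ * (S.δ1 ^ ((e:ℤ) - m))⁻¹) * (w * γ⁻¹)) *
            S.Δ ^ ((t₁:ℤ) + (t₂:ℤ) - (n:ℤ)) := by
        rw [hb1, hc₁eq, hCinv, hceq]
        have hγcomm : S.Δ ^ ((t₂:ℤ) - (n:ℤ)) * γ⁻¹ = γ⁻¹ * S.Δ ^ ((t₂:ℤ) - (n:ℤ)) :=
          pullz S hcar _ γ⁻¹
        calc (S.theta ^ m * a₀)⁻¹ * (S.theta ^ e * w * S.Δ ^ ((t₂:ℕ):ℤ) *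
                ((S.Δ ^ (n:ℕ))⁻¹ * γ⁻¹)) * S.Δ ^ ((t₁:ℕ):ℤ)
            = ((S.theta ^ m * a₀)⁻¹ * (S.theta ^ e * w)) *
                (S.Δ ^ ((t₂:ℤ) - (n:ℤ)) * γ⁻¹) * S.Δ ^ ((t₁:ℕ):ℤ) := by
              rw [← zpow_natCast S.Δ n]
              group
          _ = ((S.theta ^ m * a₀)⁻¹ * (S.theta ^ e * w)) *
                (γ⁻¹ * S.Δ ^ ((t₂:ℤ) - (n:ℤ))) * S.Δ ^ ((t₁:ℕ):ℤ) := by rw [hγcomm]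
          _ = (S.theta ^ ((e:ℤ) - (m:ℤ)) *
                (S.δ1 ^ ((e:ℤ) - m) * a₀⁻¹ * (S.δ1 ^ ((e:ℤ) - m))⁻¹) * w) *
                (γ⁻¹ * S.Δ ^ ((t₂:ℤ) - (n:ℤ))) * S.Δ ^ ((t₁:ℕ):ℤ) := by rw [hsuff]
          _ = S.theta ^ ((e:ℤ) - (m:ℤ)) *
                ((S.δ1 ^ ((e:ℤ) - m) * a₀⁻¹ * (S.δ1 ^ ((e:ℤ) - m))⁻¹) * (w * γ⁻¹)) *
                S.Δ ^ ((t₁:ℤ) + (t₂:ℤ) - (n:ℤ)) := by group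
      obtain ⟨p, w', hw', hbeq⟩ := L5 S hcar hbu hh'G hbform
      exact hbθ (hbeq ▸ form_thetaBar S hw')
    -- product formula
    have hprodA : α * β * γ = c₂ * S.Δ ^ ((t₁:ℤ) + (t₂:ℤ) - m - k - n) := by
      rw [hαeq, hβeq, hγeq]
      rw [← zpow_natCast S.Δ m, ← zpow_natCast S.Δ k, ← zpow_natCast S.Δ n]
      have s1 : ∀ (z : ℤ) (x : G), (S.Δ ^ z)⁻¹ * x = x * (S.Δ ^ z)⁻¹ := pullzi S hcar
      calc (S.theta ^ m * a₀ * (S.Δ ^ ((m:ℕ):ℤ))⁻¹) * (b * (S.Δ ^ ((k:ℕ):ℤ))⁻¹) *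
              (S.theta ^ n * c₀ * (S.Δ ^ ((n:ℕ):ℤ))⁻¹)
          = (S.theta ^ m * a₀) * ((S.Δ ^ ((m:ℕ):ℤ))⁻¹ * b) * ((S.Δ ^ ((k:ℕ):ℤ))⁻¹ *
              (S.theta ^ n * c₀)) * (S.Δ ^ ((n:ℕ):ℤ))⁻¹ := by group
        _ = (S.theta ^ m * a₀) * (b * (S.Δ ^ ((m:ℕ):ℤ))⁻¹) * ((S.theta ^ n * c₀) *
              (S.Δ ^ ((k:ℕ):ℤ))⁻¹) * (S.Δ ^ ((n:ℕ):ℤ))⁻¹ := by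
            rw [s1 ((m:ℕ):ℤ) b, s1 ((k:ℕ):ℤ) (S.theta ^ n * c₀)]
        _ = ((S.theta ^ m * a₀) * b) * ((S.Δ ^ ((m:ℕ):ℤ))⁻¹ * (S.theta ^ n * c₀)) *
              ((S.Δ ^ ((k:ℕ):ℤ))⁻¹ * (S.Δ ^ ((n:ℕ):ℤ))⁻¹) := by group
        _ = ((S.theta ^ m * a₀) * b) * ((S.theta ^ n * c₀) * (S.Δ ^ ((m:ℕ):ℤ))⁻¹) *
              ((S.Δ ^ ((k:ℕ):ℤ))⁻¹ * (S.Δ ^ ((n:ℕ):ℤ))⁻¹) := by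
            rw [s1 ((m:ℕ):ℤ) (S.theta ^ n * c₀)]
        _ = (c₁ * S.Δ ^ ((t₁:ℕ):ℤ)) * ((S.theta ^ n * c₀) * (S.Δ ^ ((m:ℕ):ℤ))⁻¹) *
              ((S.Δ ^ ((k:ℕ):ℤ))⁻¹ * (S.Δ ^ ((n:ℕ):ℤ))⁻¹) := by rw [heq1z]
        _ = c₁ * (S.Δ ^ ((t₁:ℕ):ℤ) * (S.theta ^ n * c₀)) *
              ((S.Δ ^ ((m:ℕ):ℤ))⁻¹ * (S.Δ ^ ((k:ℕ):ℤ))⁻¹ * (S.Δ ^ ((n:ℕ):ℤ))⁻¹) := by group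
        _ = c₁ * ((S.theta ^ n * c₀) * S.Δ ^ ((t₁:ℕ):ℤ)) *
              ((S.Δ ^ ((m:ℕ):ℤ))⁻¹ * (S.Δ ^ ((k:ℕ):ℤ))⁻¹ * (S.Δ ^ ((n:ℕ):ℤ))⁻¹) := by
            rw [pullz S hcar ((t₁:ℕ):ℤ) (S.theta ^ n * c₀)]
        _ = (c₁ * (S.theta ^ n * c₀)) * S.Δ ^ ((t₁:ℤ) - m - k - n) := by group
        _ = (c₂ * S.Δ ^ ((t₂:ℕ):ℤ)) * S.Δ ^ ((t₁:ℤ) - m - k - n) := by rw [heq2z]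
        _ = c₂ * S.Δ ^ ((t₁:ℤ) + (t₂:ℤ) - m - k - n) := by group
    -- depth bounds
    have hdptA : (dpt S.M S.M₁ S.Nsub (S.theta ^ m * a₀) : ℤ) ≤ (ζ:ℤ) * (m:ℕ) + ε₁ := by
      rcases Nat.eq_zero_or_pos m with rfl | hm
      · rw [dpt_theta_val S hcar hA ha₀, if_pos rfl]
        push_cast
        positivity
      · rw [dpt_theta_val S hcar hA ha₀, if_neg (by omega),
          hε₁one (Or.inl ⟨m, hm, a₀, ha₀, rfl⟩)]
        push_cast
        linarith
    have hdptC : (dpt S.M S.M₁ S.Nsub (S.theta ^ n * c₀) : ℤ) ≤ (ζ:ℤ) * (n:ℕ) + ε₂ := by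
      rcases Nat.eq_zero_or_pos n with rfl | hn
      · rw [dpt_theta_val S hcar hA hc₀, if_pos rfl]
        push_cast
        positivity
      · rw [dpt_theta_val S hcar hA hc₀, if_neg (by omega),
          hε₂one (Or.inr (Or.inl ⟨n, hn, c₀, hc₀, rfl⟩))]
        push_cast
        linarith
    have hdptbz : (dpt S.M S.M₁ S.Nsub b : ℤ) ≤ (ζ:ℤ) * (k:ℕ) := by exact_mod_cast hdptb'
    have hbound : (dpt S.M S.M₁ S.Nsub c₂ : ℤ) ≤
        (ζ:ℤ) * ((m:ℤ) + k + n - t₁ - t₂) := by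
      have hring : (ζ:ℤ) * ((m:ℤ) + k + n - t₁ - t₂) =
          (ζ:ℤ) * (m:ℕ) + (ζ:ℤ) * (k:ℕ) + (ζ:ℤ) * (n:ℕ) -
            (ζ:ℤ) * ((t₁:ℕ):ℤ) - (ζ:ℤ) * ((t₂:ℕ):ℤ) := by
        push_cast
        ring
      linarith [hε₁eq, hε₂eq, hdptA, hdptC, hdptbz, hring]
    have hdptc₂0 : (0:ℤ) ≤ (dpt S.M S.M₁ S.Nsub c₂ : ℤ) := Int.ofNat_nonneg _
    have hK0 : 0 ≤ (m:ℤ) + k + n - t₁ - t₂ := by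
      by_contra hneg
      push_neg at hneg
      have h2 : (ζ:ℤ) * ((m:ℤ) + k + n - t₁ - t₂) < 0 :=
        mul_neg_of_pos_of_neg (by linarith) hneg
      linarith
    have hK1 : 1 ≤ (m:ℤ) + k + n - t₁ - t₂ := by
      rcases lt_or_eq_of_le hK0 with h | h
      · omega
      · exfalso
        have hb2 : (dpt S.M S.M₁ S.Nsub c₂ : ℤ) ≤ 0 := by
          rw [← h] at hbound
          simpa using hbound
        have hz' : dpt S.M S.M₁ S.Nsub c₂ = 0 := by omega
        exact hc₂θ (Or.inr (mem_M1_of_dpt_zero S hcar hc₂u.1 hz'))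
    set k' : ℕ := ((m:ℤ) + k + n - t₁ - t₂).toNat with hk'def
    have hk'z : (k' : ℤ) = (m:ℤ) + k + n - t₁ - t₂ := Int.toNat_of_nonneg hK0
    have hk'1 : 1 ≤ k' := by omega
    refine ⟨c₂, k', hc₂u, hk'1, ?_, ?_⟩
    · rw [hprodA]
      have he : S.Δ ^ ((t₁:ℤ) + (t₂:ℤ) - m - k - n) = (S.Δ ^ k')⁻¹ := by
        rw [← zpow_natCast S.Δ k', hk'z, ← zpow_neg]
        congr 1
        ring
      rw [he]
    · rw [hA k' hk'1]
      have h6 : (dpt S.M S.M₁ S.Nsub c₂ : ℤ) ≤ (ζ:ℤ) * k' := by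
        rw [hk'z]; exact hbound
      have h7 : (dpt S.M S.M₁ S.Nsub c₂ : ℤ) < ((ζ * k' + 1 : ℕ) : ℤ) := by
        push_cast
        linarith
      exact_mod_cast h7
end

section
/- Assume that (H, G₁) satisfies Condition A with constant ζ and Condition B with constant ζ for some integer ζ ≥ 1. Then P ∩ P⁻¹ = ∅: no element of G is both (H, G₁)-positive and (H, G₁)-negative. -/
namespace GarsideOrder

section Aux

variable {G : Type*} [Group G]

theorem aux_leR_refl (S : Setting G) (w : G) : leR S.M w w := by
  show w * w⁻¹ ∈ S.M
  simpa using one_mem S.M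

theorem aux_units (S : Setting G) {x : G} (h1 : x ∈ S.M) (h2 : x⁻¹ ∈ S.M) : x = 1 :=
  S.garside.units_trivial x h1 h2

theorem aux_eq_of_leR_leR (S : Setting G) {x y : G} (h1 : leR S.M x y) (h2 : leR S.M y x) :
    x = y := by
  have h3 : x * y⁻¹ = 1 := aux_units S h2 (by have h1' : y * x⁻¹ ∈ S.M := h1; simpa [mul_inv_rev] using h1')
  exact mul_inv_eq_one.mp h3

theorem aux_leR_trans (S : Setting G) {x y z : G} (h1 : leR S.M x y) (h2 : leR S.M y z) :
    leR S.M x z := by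
  show z * x⁻¹ ∈ S.M
  have h : z * x⁻¹ = (z * y⁻¹) * (y * x⁻¹) := by group
  rw [h]
  exact mul_mem h2 h1

theorem aux_M1_le_M (S : Setting G) : S.M₁ ≤ S.M :=
  Submonoid.closure_le.mpr fun _ hx => hx.1

theorem aux_d1_divR_d1 (S : Setting G) : S.δ1 ∈ DivR S.M S.δ1 :=
  ⟨S.par1.mem, aux_leR_refl S _⟩

theorem aux_d1_mem_M1 (S : Setting G) : S.δ1 ∈ S.M₁ :=
  Submonoid.subset_closure (aux_d1_divR_d1 S)

theorem aux_d1_divR_Delta (S : Setting G) : S.δ1 ∈ DivR S.M S.Δ := by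
  have h := aux_d1_divR_d1 S
  rw [S.par1.div_eq] at h
  exact h.1

theorem aux_theta_mem_M (S : Setting G) : S.theta ∈ S.M := (aux_d1_divR_Delta S).2

theorem aux_M1_mem_G1 (S : Setting G) {w : G} (hw : w ∈ S.M₁) : w ∈ S.G₁ := by
  have h : parM S.M S.δ1 ≤ (parG S.M S.δ1).toSubmonoid :=
    Submonoid.closure_le.mpr fun x hx => Subgroup.subset_closure hx
  exact h hw

theorem aux_comm_d1 (S : Setting G) {g : G} (hg : g ∈ S.G₁) : Commute S.δ1 g :=
  S.delta1_central g hg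

theorem aux_central (S : Setting G) (hcar : S.car = ⊤) (g : G) : Commute S.Δ g :=
  S.delta_central g (by rw [hcar]; trivial)

theorem aux_comm_theta (S : Setting G) (hcar : S.car = ⊤) {g : G} (hg : g ∈ S.G₁) :
    Commute S.theta g :=
  (aux_central S hcar g).mul_left (aux_comm_d1 S hg).inv_left

theorem aux_comm_theta_d1 (S : Setting G) (hcar : S.car = ⊤) : Commute S.theta S.δ1 :=
  aux_comm_theta S hcar (aux_M1_mem_G1 S (aux_d1_mem_M1 S))

theorem aux_theta_mul_d1 (S : Setting G) : S.theta * S.δ1 = S.Δ := by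
  show S.Δ * S.δ1⁻¹ * S.δ1 = S.Δ
  group

theorem aux_Delta_pow_eq (S : Setting G) (hcar : S.car = ⊤) (t : ℕ) :
    S.Δ ^ t = S.theta ^ t * S.δ1 ^ t := by
  rw [← aux_theta_mul_d1 S, (aux_comm_theta_d1 S hcar).mul_pow]

theorem aux_W (S : Setting G) : ∀ w ∈ S.M₁, ∃ r : ℕ, S.δ1 ^ r * w⁻¹ ∈ S.M₁ := by
  intro w hw
  have hw' : w ∈ Submonoid.closure (DivR S.M S.δ1) := hw
  clear hw
  induction hw' using Submonoid.closure_induction with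
  | mem x hx =>
      refine ⟨1, ?_⟩
      have hmem : S.δ1 * x⁻¹ ∈ S.M := hx.2
      have hL : S.δ1 * x⁻¹ ∈ DivL S.M S.δ1 := by
        refine ⟨hmem, ?_⟩
        show (S.δ1 * x⁻¹)⁻¹ * S.δ1 ∈ S.M
        have h : (S.δ1 * x⁻¹)⁻¹ * S.δ1 = x := by group
        rw [h]
        exact hx.1
      have hR : S.δ1 * x⁻¹ ∈ DivR S.M S.δ1 := by rw [S.par1.balanced]; exact hL
      have hR' : S.δ1 * x⁻¹ ∈ S.M₁ := Submonoid.subset_closure hR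
      simpa [pow_one] using hR'
  | one => exact ⟨0, by simpa using one_mem S.M₁⟩
  | mul x y hx hy ihx ihy =>
      obtain ⟨rx, hrx⟩ := ihx
      obtain ⟨ry, hry⟩ := ihy
      refine ⟨rx + ry, ?_⟩
      have hyG1 : y ∈ S.G₁ := aux_M1_mem_G1 S hy
      have hcy : S.δ1 ^ rx * y⁻¹ = y⁻¹ * S.δ1 ^ rx :=
        (((aux_comm_d1 S hyG1).pow_left rx).inv_right).eq
      have h1 : S.δ1 ^ rx * S.δ1 ^ ry = S.δ1 ^ ry * S.δ1 ^ rx := by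
        rw [← pow_add, ← pow_add, Nat.add_comm]
      have key : S.δ1 ^ (rx + ry) * (x * y)⁻¹ = (S.δ1 ^ ry * y⁻¹) * (S.δ1 ^ rx * x⁻¹) := by
        rw [pow_add, mul_inv_rev, h1]
        simp only [mul_assoc]
        rw [← mul_assoc (S.δ1 ^ rx), hcy, mul_assoc]
      rw [key]
      exact mul_mem hry hrx

theorem aux_Q (S : Setting G) (hcar : S.car = ⊤) :
    ∀ r : ℕ, ∀ y : G, y ∈ DivR S.M S.Δ → leR S.M y (S.δ1 ^ r) → leR S.M y S.δ1 := by
  intro r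
  induction r with
  | zero =>
      intro y hy h
      have h1 : y⁻¹ ∈ S.M := by
        have h' : S.δ1 ^ 0 * y⁻¹ ∈ S.M := h
        simpa using h'
      have h2 : y = 1 := aux_units S hy.1 h1
      rw [h2]
      show S.δ1 * (1:G)⁻¹ ∈ S.M
      simpa using S.par1.mem
  | succ r ih =>
      intro y hy h
      have htop : ∀ z : G, z ∈ S.car := fun z => by rw [hcar]; trivial
      obtain ⟨j, hjcar, hyj, hdj, hjmin⟩ := S.garside.join y (htop y) S.δ1 (htop S.δ1)
      have hjd : leR S.M j (S.δ1 ^ (r+1)) := by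
        refine hjmin _ (htop _) h ?_
        show S.δ1 ^ (r+1) * S.δ1⁻¹ ∈ S.M
        have he : S.δ1 ^ (r+1) * S.δ1⁻¹ = S.δ1 ^ r := by rw [pow_succ]; group
        rw [he]
        exact pow_mem S.par1.mem r
      have hjD : leR S.M j S.Δ := hjmin _ (htop _) hy.2 (aux_d1_divR_Delta S).2
      set w := j * S.δ1⁻¹ with hw
      have hwM : w ∈ S.M := hdj
      have hwθ : leR S.M w S.theta := by
        show S.theta * w⁻¹ ∈ S.M
        have he : S.theta * w⁻¹ = S.Δ * j⁻¹ := by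
          show S.Δ * S.δ1⁻¹ * (j * S.δ1⁻¹)⁻¹ = S.Δ * j⁻¹
          group
        rw [he]
        exact hjD
      have hwr : leR S.M w (S.δ1 ^ r) := by
        show S.δ1 ^ r * w⁻¹ ∈ S.M
        have he : S.δ1 ^ r * w⁻¹ = S.δ1 ^ (r+1) * j⁻¹ := by rw [hw, pow_succ]; group
        rw [he]
        exact hjd
      have hθD : leR S.M S.theta S.Δ := by
        show S.Δ * S.theta⁻¹ ∈ S.M
        have hcd : S.Δ * S.δ1 = S.δ1 * S.Δ := (aux_central S hcar S.δ1).eq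
        have he : S.Δ * S.theta⁻¹ = S.δ1 := by
          show S.Δ * (S.Δ * S.δ1⁻¹)⁻¹ = S.δ1
          rw [mul_inv_rev, inv_inv, ← mul_assoc, hcd]
          group
        rw [he]
        exact S.par1.mem
      have hwD : w ∈ DivR S.M S.Δ := ⟨hwM, aux_leR_trans S hwθ hθD⟩
      have hwd1 : leR S.M w S.δ1 := ih w hwD hwr
      have hwM1 : w ∈ S.M₁ := Submonoid.subset_closure ⟨hwM, hwd1⟩
      have h1 : w * S.δ1 ∈ DivR S.M S.Δ := by
        refine ⟨mul_mem hwM S.par1.mem, ?_⟩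
        show S.Δ * (w * S.δ1)⁻¹ ∈ S.M
        have he : S.Δ * (w * S.δ1)⁻¹ = S.theta * w⁻¹ := by
          show _ = S.Δ * S.δ1⁻¹ * w⁻¹
          rw [mul_inv_rev]
          group
        rw [he]
        exact hwθ
      have h2 : w * S.δ1 ∈ DivR S.M S.δ1 := by
        rw [S.par1.div_eq]
        exact ⟨h1, mul_mem hwM1 (aux_d1_mem_M1 S)⟩
      have h3 : w⁻¹ ∈ S.M := by
        have h4 : S.δ1 * (w * S.δ1)⁻¹ ∈ S.M := h2.2
        have he : S.δ1 * (w * S.δ1)⁻¹ = w⁻¹ := by rw [mul_inv_rev]; group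
        rwa [he] at h4
      have hW1 : w = 1 := aux_units S hwM h3
      have hjδ : j = S.δ1 := by
        have he : j = w * S.δ1 := by rw [hw]; group
        rw [he, hW1, one_mul]
      rw [← hjδ]
      exact hyj

theorem aux_K (S : Setting G) (hcar : S.car = ⊤) (r : ℕ) (h : leR S.M S.Δ (S.δ1 ^ r)) :
    False := by
  have hD : S.Δ ∈ DivR S.M S.Δ := ⟨S.garside.delta_mem, aux_leR_refl S _⟩
  have h1 : leR S.M S.Δ S.δ1 := aux_Q S hcar r S.Δ hD h
  have h2 : (S.Δ * S.δ1⁻¹)⁻¹ ∈ S.M := by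
    have he : (S.Δ * S.δ1⁻¹)⁻¹ = S.δ1 * S.Δ⁻¹ := by group
    rw [he]
    exact h1
  have h3 : S.Δ * S.δ1⁻¹ = 1 := aux_units S (aux_theta_mem_M S) h2
  have h4 : S.Δ = S.δ1 := by rwa [mul_inv_eq_one] at h3
  apply S.M1_ne
  show Submonoid.closure (DivR S.M S.δ1) = S.M
  rw [← h4]
  exact S.garside.div_gen_monoid

theorem aux_WG (S : Setting G) : ∀ g ∈ S.G₁, ∃ E : ℕ, S.δ1 ^ E * g ∈ S.M₁ := by
  intro g hg
  have hg' : g ∈ Subgroup.closure (DivR S.M S.δ1) := hg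
  clear hg
  induction hg' using Subgroup.closure_induction with
  | mem x hx => exact ⟨0, by have hx' : x ∈ S.M₁ := Submonoid.subset_closure hx; simpa using hx'⟩
  | one => exact ⟨0, by simpa using one_mem S.M₁⟩
  | mul x y hx hy ihx ihy =>
      obtain ⟨E, hE⟩ := ihx
      obtain ⟨F, hF⟩ := ihy
      refine ⟨E + F, ?_⟩
      have hcx : S.δ1 ^ F * x = x * S.δ1 ^ F := ((aux_comm_d1 S hx).pow_left F).eq
      have key : S.δ1 ^ (E + F) * (x * y) = (S.δ1 ^ E * x) * (S.δ1 ^ F * y) := by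
        rw [pow_add]
        simp only [mul_assoc]
        rw [← mul_assoc (S.δ1 ^ F) x, hcx, mul_assoc]
      rw [key]
      exact mul_mem hE hF
  | inv x hx ihx =>
      obtain ⟨E, hE⟩ := ihx
      obtain ⟨r, hr⟩ := aux_W S _ hE
      refine ⟨r, ?_⟩
      have he : S.δ1 ^ r * x⁻¹ = S.δ1 ^ r * (S.δ1 ^ E * x)⁻¹ * S.δ1 ^ E := by group
      rw [he]
      exact mul_mem hr (pow_mem (aux_d1_mem_M1 S) E)

theorem aux_Dform (S : Setting G) (hΔne : S.Δ ≠ 1) :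
    ∀ w ∈ S.M, ∃ c : G, ∃ t : ℕ, Unmovable S.M S.Δ c ∧ w = c * S.Δ ^ t := by
  classical
  intro w hw
  obtain ⟨n, hn1, hn⟩ := S.garside.noetherian w hw
  set P : ℕ → Prop := fun t => w * (S.Δ ^ t)⁻¹ ∈ S.M with hPdef
  have hbound : ∀ t, P t → t ≤ n := by
    intro t ht
    by_cases hwt : w * (S.Δ ^ t)⁻¹ = 1
    · have hwΔ : w = S.Δ ^ t := by rwa [mul_inv_eq_one] at hwt
      have hmem : ∀ x ∈ List.replicate t S.Δ, x ∈ S.M ∧ x ≠ 1 := by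
        intro x hx
        rw [List.eq_of_mem_replicate hx]
        exact ⟨S.garside.delta_mem, hΔne⟩
      have hprod : (List.replicate t S.Δ).prod = w := by
        rw [List.prod_replicate]
        exact hwΔ.symm
      have hlen := hn _ hmem hprod
      simpa using hlen
    · have hmem : ∀ x ∈ (w * (S.Δ ^ t)⁻¹ :: List.replicate t S.Δ), x ∈ S.M ∧ x ≠ 1 := by
        intro x hx
        rcases List.mem_cons.mp hx with h | h
        · rw [h]; exact ⟨ht, hwt⟩
        · rw [List.eq_of_mem_replicate h]
          exact ⟨S.garside.delta_mem, hΔne⟩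
      have hprod : (w * (S.Δ ^ t)⁻¹ :: List.replicate t S.Δ).prod = w := by
        rw [List.prod_cons, List.prod_replicate]
        group
      have hlen := hn _ hmem hprod
      simp only [List.length_cons, List.length_replicate] at hlen
      omega
  have hP0 : P 0 := by simpa [hPdef] using hw
  have hPt0 : P (Nat.findGreatest P (n+1)) := Nat.findGreatest_spec (Nat.zero_le _) hP0
  have hle : Nat.findGreatest P (n+1) ≤ n := hbound _ hPt0
  have hnot : ¬ P (Nat.findGreatest P (n+1) + 1) :=
    Nat.findGreatest_is_greatest (n := n+1) (Nat.lt_succ_self _) (by omega)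
  refine ⟨w * (S.Δ ^ (Nat.findGreatest P (n+1)))⁻¹, Nat.findGreatest P (n+1),
    ⟨hPt0, ?_⟩, by group⟩
  intro hcon
  apply hnot
  show w * (S.Δ ^ (Nat.findGreatest P (n+1) + 1))⁻¹ ∈ S.M
  have he : w * (S.Δ ^ (Nat.findGreatest P (n+1) + 1))⁻¹ =
      w * (S.Δ ^ (Nat.findGreatest P (n+1)))⁻¹ * S.Δ⁻¹ := by
    rw [pow_succ]
    group
  rw [he]
  exact hcon

theorem aux_tail_self (S : Setting G) (N' : Submonoid G) (w : G) (hw : w ∈ N') :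
    tail S.M N' w = w := by
  have hex : ∃ b : G, b ∈ N' ∧
      {c : G | c ∈ N' ∧ leR S.M c w} = {c : G | c ∈ N' ∧ leR S.M c b} := ⟨w, hw, rfl⟩
  rw [tail, dif_pos hex]
  obtain ⟨hmem, hset⟩ := hex.choose_spec
  have hiff := Set.ext_iff.mp hset
  have h1 : w ∈ {c : G | c ∈ N' ∧ leR S.M c hex.choose} :=
    (hiff w).mp ⟨hw, aux_leR_refl S w⟩
  have h2 : hex.choose ∈ {c : G | c ∈ N' ∧ leR S.M c w} :=
    (hiff hex.choose).mpr ⟨hmem, aux_leR_refl S _⟩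
  exact aux_eq_of_leR_leR S h2.2 h1.2

theorem aux_tail_delta (S : Setting G) : tail S.M S.M₁ S.Δ = S.δ1 := by
  have hsets : {c : G | c ∈ S.M₁ ∧ leR S.M c S.Δ} = {c : G | c ∈ S.M₁ ∧ leR S.M c S.δ1} := by
    ext c
    constructor
    · rintro ⟨hc1, hc2⟩
      refine ⟨hc1, ?_⟩
      have h : c ∈ DivR S.M S.δ1 := by
        rw [S.par1.div_eq]
        exact ⟨⟨aux_M1_le_M S hc1, hc2⟩, hc1⟩
      exact h.2
    · rintro ⟨hc1, hc2⟩
      refine ⟨hc1, ?_⟩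
      show S.Δ * c⁻¹ ∈ S.M
      have he : S.Δ * c⁻¹ = S.theta * (S.δ1 * c⁻¹) := by
        show _ = S.Δ * S.δ1⁻¹ * (S.δ1 * c⁻¹)
        group
      rw [he]
      exact mul_mem (aux_theta_mem_M S) hc2
  have hex : ∃ b : G, b ∈ S.M₁ ∧
      {c : G | c ∈ S.M₁ ∧ leR S.M c S.Δ} = {c : G | c ∈ S.M₁ ∧ leR S.M c b} :=
    ⟨S.δ1, aux_d1_mem_M1 S, hsets⟩
  rw [tail, dif_pos hex]
  obtain ⟨hmem, hset⟩ := hex.choose_spec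
  have hiff := Set.ext_iff.mp hset
  have h1 : S.δ1 ∈ {c : G | c ∈ S.M₁ ∧ leR S.M c hex.choose} :=
    (hiff S.δ1).mp ⟨aux_d1_mem_M1 S, (aux_d1_divR_Delta S).2⟩
  have h2 : hex.choose ∈ {c : G | c ∈ S.M₁ ∧ leR S.M c S.Δ} :=
    (hiff hex.choose).mpr ⟨hmem, aux_leR_refl S _⟩
  have h3 : hex.choose ∈ DivR S.M S.δ1 := by
    rw [S.par1.div_eq]
    exact ⟨⟨aux_M1_le_M S h2.1, h2.2⟩, h2.1⟩
  exact aux_eq_of_leR_leR S h3.2 h1.2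

theorem aux_dpt_le (S : Setting G) (w : G) (p : ℕ) (hp : 1 ≤ p)
    (h : strip S.M S.M₁ S.Nsub p w = 1) : dpt S.M S.M₁ S.Nsub w ≤ p / 2 := by
  have h1 : bh S.M S.M₁ S.Nsub w ≤ p := Nat.sInf_le ⟨hp, h⟩
  have h2 : dpt S.M S.M₁ S.Nsub w = bh S.M S.M₁ S.Nsub w / 2 := rfl
  rw [h2]
  exact Nat.div_le_div_right h1

theorem aux_dpt_M1 (S : Setting G) (w : G) (hw : w ∈ S.M₁) :
    dpt S.M S.M₁ S.Nsub w = 0 := by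
  have hs : strip S.M S.M₁ S.Nsub 1 w = 1 := by
    have he : strip S.M S.M₁ S.Nsub 1 w = w * (tail S.M S.M₁ w)⁻¹ := rfl
    rw [he, aux_tail_self S S.M₁ w hw]
    group
  have h1 := aux_dpt_le S w 1 le_rfl hs
  omega

theorem aux_dpt_Delta_le_one (S : Setting G) (hθN : S.theta ∈ S.Nsub) :
    dpt S.M S.M₁ S.Nsub S.Δ ≤ 1 := by
  have h1 : strip S.M S.M₁ S.Nsub 1 S.Δ = S.theta := by
    have he : strip S.M S.M₁ S.Nsub 1 S.Δ = S.Δ * (tail S.M S.M₁ S.Δ)⁻¹ := rfl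
    rw [he, aux_tail_delta S]
    rfl
  have h2 : strip S.M S.M₁ S.Nsub 2 S.Δ = 1 := by
    have he : strip S.M S.M₁ S.Nsub 2 S.Δ =
        strip S.M S.M₁ S.Nsub 1 S.Δ * (tail S.M S.Nsub (strip S.M S.M₁ S.Nsub 1 S.Δ))⁻¹ := rfl
    rw [he, h1, aux_tail_self S S.Nsub S.theta hθN]
    group
  have h3 := aux_dpt_le S S.Δ 2 (by norm_num) h2
  simpa using h3

theorem aux_lam_divR_Delta (S : Setting G) : S.lam ∈ DivR S.M S.Δ := by
  have h : S.lam ∈ DivR S.M S.lam := ⟨S.parH.mem, aux_leR_refl S _⟩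
  rw [S.parH.div_eq] at h
  exact h.1

theorem aux_lam_ne_Delta (S : Setting G) : S.lam ≠ S.Δ := by
  intro h
  apply S.N_ne
  show Submonoid.closure (DivR S.M S.lam) = S.M
  rw [h]
  exact S.garside.div_gen_monoid

theorem aux_lam_unmovable (S : Setting G) : Unmovable S.M S.Δ S.lam := by
  refine ⟨S.parH.mem, fun h => ?_⟩
  exact aux_lam_ne_Delta S (aux_eq_of_leR_leR S (aux_lam_divR_Delta S).2 h)

theorem aux_lam_not_M1 (S : Setting G) : S.lam ∉ S.M₁ := by
  intro hlam
  have hdiv : S.lam ∈ DivR S.M S.δ1 := by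
    rw [S.par1.div_eq]
    exact ⟨aux_lam_divR_Delta S, hlam⟩
  have hsub : parM S.M S.lam ≤ S.M₁ := by
    apply Submonoid.closure_le.mpr
    intro s hs
    exact Submonoid.subset_closure ⟨hs.1, aux_leR_trans S hs.2 hdiv.2⟩
  have hM : S.M ≤ S.M₁ := by
    rw [← S.unionGen]
    apply Submonoid.closure_le.mpr
    rintro x (hx | hx)
    · exact hsub hx
    · exact hx
  exact S.M1_ne (le_antisymm (aux_M1_le_M S) hM)

theorem aux_lam_theta_case (S : Setting G) (hcar : S.car = ⊤)
    (h : S.lam ∈ thetaSet S.M₁ S.theta) : S.theta ∈ S.Nsub := by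
  obtain ⟨m, hm, κ, hκ, heq⟩ := h
  have hc : κ * S.theta⁻¹ = S.theta⁻¹ * κ :=
    ((aux_comm_theta S hcar (aux_M1_mem_G1 S hκ)).inv_left).eq.symm
  have hle : leR S.M S.theta S.lam := by
    show S.lam * S.theta⁻¹ ∈ S.M
    have he : S.lam * S.theta⁻¹ = S.theta ^ (m-1) * κ := by
      rw [heq]
      calc S.theta ^ m * κ * S.theta⁻¹ = S.theta ^ m * (κ * S.theta⁻¹) := by rw [mul_assoc]
        _ = S.theta ^ m * (S.theta⁻¹ * κ) := by rw [hc]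
        _ = (S.theta ^ m * S.theta⁻¹) * κ := by rw [mul_assoc]
        _ = S.theta ^ (m-1) * κ := by
              have h5 : S.theta ^ (m-1) * S.theta = S.theta ^ m := by
                rw [← pow_succ, Nat.sub_add_cancel hm]
              rw [← h5]
              group
    rw [he]
    exact mul_mem (pow_mem (aux_theta_mem_M S) _) (aux_M1_le_M S hκ)
  exact Submonoid.subset_closure ⟨aux_theta_mem_M S, hle⟩

theorem aux_thetaBar_form (S : Setting G) {w : G} (hw : w ∈ thetaBar S.M₁ S.theta) :
    ∃ (j : ℕ) (κ : G), κ ∈ S.M₁ ∧ w = S.theta ^ j * κ := by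
  rcases hw with h | h
  · obtain ⟨k, _, κ, hκ, heq⟩ := h
    exact ⟨k, κ, hκ, heq⟩
  · exact ⟨0, w, h, by simp⟩

theorem aux_XX (S : Setting G) (hcar : S.car = ⊤)
    (hlam : S.lam ∉ thetaBar S.M₁ S.theta) (m : ℕ) (hm : 1 ≤ m) (g : G) (hg : g ∈ S.G₁)
    (heq : S.lam = S.theta ^ m * g) : False := by
  obtain ⟨E, hwM1⟩ := aux_WG S g hg
  set w := S.δ1 ^ E * g with hwdef
  set c := S.Δ * S.lam⁻¹ with hc
  have hcM : c ∈ S.M := (aux_lam_divR_Delta S).2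
  have hwM : w ∈ S.M := aux_M1_le_M S hwM1
  have key1 : S.δ1 ^ (m + E) * S.lam = S.Δ ^ m * w := by
    rw [heq, hwdef]
    have hD : S.Δ ^ m = S.theta ^ m * S.δ1 ^ m := aux_Delta_pow_eq S hcar m
    rw [hD]
    have hcm : S.δ1 ^ (m+E) * S.theta ^ m = S.theta ^ m * S.δ1 ^ (m+E) :=
      (((aux_comm_theta_d1 S hcar).symm).pow_pow (m+E) m).eq
    calc S.δ1 ^ (m+E) * (S.theta ^ m * g) = (S.δ1 ^ (m+E) * S.theta ^ m) * g := by
          rw [mul_assoc]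
      _ = S.theta ^ m * S.δ1 ^ (m+E) * g := by rw [hcm]
      _ = S.theta ^ m * S.δ1 ^ m * (S.δ1 ^ E * g) := by
          rw [pow_add]
          simp only [mul_assoc]
  have key2 : S.δ1 ^ (m + E) = w * S.Δ ^ (m-1) * c := by
    have hDc : S.Δ ^ m * w = w * S.Δ ^ m := ((aux_central S hcar w).pow_left m).eq
    have h1 : S.δ1 ^ (m + E) = S.Δ ^ m * w * S.lam⁻¹ := by rw [← key1]; group
    rw [h1, hDc, hc]
    calc w * S.Δ ^ m * S.lam⁻¹ = w * (S.Δ ^ (m-1) * S.Δ) * S.lam⁻¹ := by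
          rw [← pow_succ, Nat.sub_add_cancel hm]
      _ = w * S.Δ ^ (m-1) * (S.Δ * S.lam⁻¹) := by simp only [mul_assoc]
  rcases Nat.lt_or_ge m 2 with h2 | h2
  · -- m = 1
    have hm1 : m = 1 := by omega
    rw [hm1] at key2
    simp only [Nat.sub_self, pow_zero, mul_one] at key2
    have hcle : leR S.M c (S.δ1 ^ (1 + E)) := by
      show S.δ1 ^ (1 + E) * c⁻¹ ∈ S.M
      rw [key2]
      simpa using hwM
    have hcD : c ∈ DivR S.M S.Δ := by
      refine ⟨hcM, ?_⟩
      show S.Δ * c⁻¹ ∈ S.M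
      have hcen : S.Δ * S.lam = S.lam * S.Δ := (aux_central S hcar S.lam).eq
      have he : S.Δ * c⁻¹ = S.lam := by
        rw [hc, mul_inv_rev, inv_inv, ← mul_assoc, hcen]
        group
      rw [he]
      exact S.parH.mem
    have hcd1 : leR S.M c S.δ1 := aux_Q S hcar (1+E) c hcD hcle
    set d := S.δ1 * c⁻¹ with hd
    have hdM : d ∈ S.M := hcd1
    have hdM1 : d ∈ S.M₁ := by
      have hL : d ∈ DivL S.M S.δ1 := by
        refine ⟨hdM, ?_⟩
        show d⁻¹ * S.δ1 ∈ S.M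
        have he : d⁻¹ * S.δ1 = c := by rw [hd]; group
        rw [he]
        exact hcM
      have hR : d ∈ DivR S.M S.δ1 := by rw [S.par1.balanced]; exact hL
      exact Submonoid.subset_closure hR
    apply hlam
    left
    refine ⟨1, le_rfl, d, hdM1, ?_⟩
    rw [pow_one, hd, hc]
    have hθδ : S.theta * S.δ1 = S.Δ := aux_theta_mul_d1 S
    have hcen : S.Δ * S.lam = S.lam * S.Δ := (aux_central S hcar S.lam).eq
    rw [mul_inv_rev, inv_inv, ← mul_assoc, ← mul_assoc, hθδ, hcen]
    group
  · -- m ≥ 2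
    apply aux_K S hcar (m + E)
    show S.δ1 ^ (m + E) * S.Δ⁻¹ ∈ S.M
    have hm' : m - 1 = (m-2) + 1 := by omega
    have hcc : c * S.Δ⁻¹ = S.Δ⁻¹ * c := ((aux_central S hcar c).inv_left).eq.symm
    have he : S.δ1 ^ (m + E) * S.Δ⁻¹ = w * S.Δ ^ (m-2) * c := by
      rw [key2, hm', pow_succ]
      calc w * (S.Δ ^ (m-2) * S.Δ) * c * S.Δ⁻¹
          = w * S.Δ ^ (m-2) * S.Δ * (c * S.Δ⁻¹) := by simp only [mul_assoc]
        _ = w * S.Δ ^ (m-2) * S.Δ * (S.Δ⁻¹ * c) := by rw [hcc]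
        _ = w * S.Δ ^ (m-2) * c := by simp only [mul_assoc, mul_inv_cancel_left]
    rw [he]
    exact mul_mem (mul_mem hwM (pow_mem S.garside.delta_mem _)) hcM

end Aux

end GarsideOrder

open GarsideOrder in
/-- Assuming Conditions A and B with constant `ζ ≥ 1`, no element of `G` is both
`(H, G₁)`-positive and `(H, G₁)`-negative. -/
theorem statement7 {G : Type*} [Group G] (S : Setting G) (hcar : S.car = ⊤)
    (ζ : ℕ) (hζ : 1 ≤ ζ) (hA : S.condA ζ) (hB : S.condB ζ) :
    ∀ α : G, ¬(α ∈ S.Pos ∧ α ∈ S.Neg) := by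
  intro α hcontra
  obtain ⟨hpos, hneg⟩ := hcontra
  have hneg' : Negative S.M S.M₁ S.Nsub S.Δ α := hneg
  have hpos' : Negative S.M S.M₁ S.Nsub S.Δ α⁻¹ := hpos
  obtain ⟨a, k, haU, hk, hαeq, hda⟩ := hneg'
  obtain ⟨b, l, hbU, hl, hβeq, hdb⟩ := hpos'
  have hcent : ∀ g : G, Commute S.Δ g := aux_central S hcar
  have hb_eq : b = S.Δ ^ k * a⁻¹ * S.Δ ^ l := by
    have h1 : α⁻¹ = S.Δ ^ k * a⁻¹ := by rw [hαeq]; group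
    rw [h1] at hβeq
    rw [hβeq]
    group
  have hab : a * b = S.Δ ^ (k + l) := by
    rw [hb_eq]
    have h2 : S.Δ ^ k * a⁻¹ = a⁻¹ * S.Δ ^ k := ((hcent a).pow_left k).inv_right.eq
    calc a * (S.Δ ^ k * a⁻¹ * S.Δ ^ l) = a * (a⁻¹ * S.Δ ^ k * S.Δ ^ l) := by rw [h2]
      _ = S.Δ ^ k * S.Δ ^ l := by group
      _ = S.Δ ^ (k+l) := by rw [pow_add]
  have hΔinv : S.Δ⁻¹ ∉ S.M := by
    intro h
    exact haU.2 (mul_mem haU.1 h)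
  have hΔne : S.Δ ≠ 1 := by
    intro h
    apply hΔinv
    rw [h]
    simpa using one_mem S.M
  have h1U : Unmovable S.M S.Δ (1:G) := by
    refine ⟨one_mem _, fun h => hΔinv ?_⟩
    have h' : (1:G) * S.Δ⁻¹ ∈ S.M := h
    simpa using h'
  rw [hA k hk] at hda
  rw [hA l hl] at hdb
  have hda' : dpt S.M S.M₁ S.Nsub a ≤ ζ * k := Nat.lt_succ_iff.mp hda
  have hdb' : dpt S.M S.M₁ S.Nsub b ≤ ζ * l := Nat.lt_succ_iff.mp hdb
  by_cases hTB : a ∈ thetaBar S.M₁ S.theta ∧ b ∈ thetaBar S.M₁ S.theta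
  · -- both unmovable parts are theta-elements
    obtain ⟨haTB, hbTB⟩ := hTB
    by_cases hlamTB : S.lam ∈ thetaBar S.M₁ S.theta
    · -- then θ ∈ N and dpt Δ ≤ 1, contradicting Condition A
      have hlamΘ : S.lam ∈ thetaSet S.M₁ S.theta := by
        rcases hlamTB with h | h
        · exact h
        · exact absurd h (aux_lam_not_M1 S)
      have hθN := aux_lam_theta_case S hcar hlamΘ
      have hle := aux_dpt_Delta_le_one S hθN
      have hAΔ := hA 1 le_rfl
      rw [pow_one, mul_one] at hAΔ
      omega
    · by_cases hM1ab : a ∈ S.M₁ ∧ b ∈ S.M₁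
      · have habM1 : a * b ∈ S.M₁ := mul_mem hM1ab.1 hM1ab.2
        rw [hab] at habM1
        have h0 := aux_dpt_M1 S _ habM1
        rw [hA (k+l) (by omega)] at h0
        exact absurd h0 (Nat.succ_ne_zero _)
      · have hΘab : a ∈ thetaSet S.M₁ S.theta ∨ b ∈ thetaSet S.M₁ S.theta := by
          rcases haTB with h | h
          · exact Or.inl h
          · rcases hbTB with h' | h'
            · exact Or.inr h'
            · exact absurd ⟨h, h'⟩ hM1ab
        have hlamU := aux_lam_unmovable S
        obtain ⟨c₂, t₂, hc₂U, hblam⟩ :=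
          aux_Dform S hΔne (b * S.lam) (mul_mem hbU.1 S.parH.mem)
        by_cases hc₂TB : c₂ ∈ thetaBar S.M₁ S.theta
        · -- structural contradiction
          obtain ⟨j, κb, hκb, hbform⟩ := aux_thetaBar_form S hbTB
          obtain ⟨p, κ₂, hκ₂2, hc₂form⟩ := aux_thetaBar_form S hc₂TB
          have hκ'M1 : S.δ1 ^ t₂ * κ₂ ∈ S.M₁ := mul_mem (pow_mem (aux_d1_mem_M1 S) _) hκ₂2
          have heqn : S.theta ^ j * (κb * S.lam) = S.theta ^ (p + t₂) * (S.δ1 ^ t₂ * κ₂) := by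
            have h1 : b * S.lam = S.theta ^ j * (κb * S.lam) := by rw [hbform]; group
            rw [← h1, hblam, hc₂form]
            have hDp : S.Δ ^ t₂ = S.theta ^ t₂ * S.δ1 ^ t₂ := aux_Delta_pow_eq S hcar t₂
            have hcκ : κ₂ * S.Δ ^ t₂ = S.Δ ^ t₂ * κ₂ := ((hcent κ₂).pow_left t₂).eq.symm
            calc S.theta ^ p * κ₂ * S.Δ ^ t₂ = S.theta ^ p * (S.Δ ^ t₂ * κ₂) := by
                  rw [mul_assoc, hcκ]
              _ = S.theta ^ p * (S.theta ^ t₂ * S.δ1 ^ t₂ * κ₂) := by rw [hDp]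
              _ = S.theta ^ (p + t₂) * (S.δ1 ^ t₂ * κ₂) := by
                  rw [pow_add]
                  simp only [mul_assoc]
          rcases Nat.lt_or_ge j (p + t₂) with hjP | hjP
          · -- λ = θ^{P-j} * (κb⁻¹ * κ')
            have hcancel : κb * S.lam = S.theta ^ (p + t₂ - j) * (S.δ1 ^ t₂ * κ₂) := by
              have h2 : S.theta ^ (p + t₂) = S.theta ^ j * S.theta ^ (p + t₂ - j) := by
                rw [← pow_add]
                congr 1
                omega
              rw [h2, mul_assoc] at heqn
              exact mul_left_cancel heqn
            have hcκb : κb⁻¹ * S.theta ^ (p + t₂ - j) = S.theta ^ (p + t₂ - j) * κb⁻¹ :=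
              (((aux_comm_theta S hcar (aux_M1_mem_G1 S hκb)).pow_left (p + t₂ - j)).inv_right).eq.symm
            have hlameq : S.lam = S.theta ^ (p + t₂ - j) * (κb⁻¹ * (S.δ1 ^ t₂ * κ₂)) := by
              calc S.lam = κb⁻¹ * (κb * S.lam) := by group
                _ = κb⁻¹ * (S.theta ^ (p + t₂ - j) * (S.δ1 ^ t₂ * κ₂)) := by rw [hcancel]
                _ = (κb⁻¹ * S.theta ^ (p + t₂ - j)) * (S.δ1 ^ t₂ * κ₂) := by rw [mul_assoc]
                _ = S.theta ^ (p + t₂ - j) * (κb⁻¹ * (S.δ1 ^ t₂ * κ₂)) := by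
                    rw [hcκb, mul_assoc]
            exact aux_XX S hcar hlamTB (p + t₂ - j) (by omega) _
              (mul_mem (inv_mem (aux_M1_mem_G1 S hκb)) (aux_M1_mem_G1 S hκ'M1)) hlameq
          · -- λ right-divides an element of M₁
            have hcancel : S.theta ^ (j - (p + t₂)) * (κb * S.lam) = S.δ1 ^ t₂ * κ₂ := by
              have h2 : S.theta ^ j = S.theta ^ (p + t₂) * S.theta ^ (j - (p + t₂)) := by
                rw [← pow_add]
                congr 1
                omega
              rw [h2, mul_assoc] at heqn
              exact mul_left_cancel heqn
            have hlamκ' : leR S.M S.lam (S.δ1 ^ t₂ * κ₂) := by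
              show S.δ1 ^ t₂ * κ₂ * S.lam⁻¹ ∈ S.M
              rw [← hcancel]
              have he : S.theta ^ (j - (p + t₂)) * (κb * S.lam) * S.lam⁻¹ =
                  S.theta ^ (j - (p + t₂)) * κb := by group
              rw [he]
              exact mul_mem (pow_mem (aux_theta_mem_M S) _) (aux_M1_le_M S hκb)
            obtain ⟨r, hr⟩ := aux_W S _ hκ'M1
            have hlamr : leR S.M S.lam (S.δ1 ^ r) := by
              show S.δ1 ^ r * S.lam⁻¹ ∈ S.M
              have he : S.δ1 ^ r * S.lam⁻¹ =
                  (S.δ1 ^ r * (S.δ1 ^ t₂ * κ₂)⁻¹) * (S.δ1 ^ t₂ * κ₂ * S.lam⁻¹) := by group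
              rw [he]
              exact mul_mem (aux_M1_le_M S hr) hlamκ'
            have hQ := aux_Q S hcar r S.lam (aux_lam_divR_Delta S) hlamr
            exact aux_lam_not_M1 S (Submonoid.subset_closure ⟨S.parH.mem, hQ⟩)
        · -- the chain of Condition B applications
          obtain ⟨ε₂, hε₂le, heq₂, hcl₂⟩ := hB b S.lam c₂ (t₂ : ℤ) hbU hlamU
            (fun h => hlamTB h.2) hc₂U (by rw [zpow_natCast]; exact hblam)
          have hac₂ : a * c₂ = S.lam * S.Δ ^ (((k+l : ℕ) : ℤ) - (t₂ : ℤ)) := by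
            have hc₂eq : c₂ = b * S.lam * (S.Δ ^ t₂)⁻¹ := by rw [hblam]; group
            rw [hc₂eq, ← mul_assoc, ← mul_assoc, hab]
            have h3 : S.Δ ^ (k+l) * S.lam = S.lam * S.Δ ^ (k+l) := ((hcent S.lam).pow_left _).eq
            rw [h3, mul_assoc]
            congr 1
            rw [zpow_sub, zpow_natCast, zpow_natCast]
          obtain ⟨ε₃, hε₃le, heq₃, hcl₃⟩ := hB a c₂ S.lam (((k+l : ℕ) : ℤ) - (t₂ : ℤ)) haU
            hc₂U (fun h => hc₂TB h.2) hlamU hac₂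
          have hexp : (ζ : ℤ) * (((k+l : ℕ) : ℤ) - (t₂ : ℤ)) =
              (ζ:ℤ)*(k:ℤ) + (ζ:ℤ)*(l:ℤ) - (ζ:ℤ)*(t₂:ℤ) := by push_cast; ring
          rw [hexp] at heq₃
          have eA : ((dpt S.M S.M₁ S.Nsub a : ℤ)) ≤ (ζ : ℤ) * k := by exact_mod_cast hda'
          have eB : ((dpt S.M S.M₁ S.Nsub b : ℤ)) ≤ (ζ : ℤ) * l := by exact_mod_cast hdb'
          rcases hΘab with hΘ | hΘ
          · have h1 : ε₃ = 1 := hcl₃ (Or.inl hΘ)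
            rw [h1] at heq₃
            have h2 : (0:ℤ) ≤ (ε₂ : ℤ) := Int.natCast_nonneg _
            push_cast at heq₂ heq₃
            linarith
          · have h1 : ε₂ = 1 := hcl₂ (Or.inl hΘ)
            rw [h1] at heq₂
            have h2 : (0:ℤ) ≤ (ε₃ : ℤ) := Int.natCast_nonneg _
            push_cast at heq₂ heq₃
            linarith
  · -- main case: one of a, b is not a theta element
    obtain ⟨ε, hεle, heq, hεone⟩ :=
      hB a b 1 ((k+l : ℕ) : ℤ) haU hbU hTB h1U (by rw [one_mul, zpow_natCast]; exact hab)
    have hε1 : ε = 1 := hεone (Or.inr (Or.inr (one_mem _)))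
    rw [hε1] at heq
    have e1 : ((dpt S.M S.M₁ S.Nsub a : ℤ)) ≤ (ζ : ℤ) * k := by exact_mod_cast hda'
    have e2 : ((dpt S.M S.M₁ S.Nsub b : ℤ)) ≤ (ζ : ℤ) * l := by exact_mod_cast hdb'
    have e3 : (0:ℤ) ≤ (dpt S.M S.M₁ S.Nsub 1 : ℤ) := Int.natCast_nonneg _
    have e4 : (ζ : ℤ) * ((k+l : ℕ) : ℤ) = (ζ:ℤ) * (k:ℤ) + (ζ:ℤ) * (l:ℤ) := by push_cast; ring
    rw [e4] at heq
    push_cast at heq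
    linarith
end
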